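/- arXiv:1712.05915 — 4 statements merged into one kernel-verified Lean document; each statement's English description precedes it below -/
import Mathlib

section
/- For every a > 0 and H ∈ (1/2, 1), one has (2H-1) ∫_{[0,∞)²} e^{-a(t+s)} |t-s|^{2H-2} ds dt = a^{-2H} Γ(2H). -/
open MeasureTheory Real Set Filter
open Topology

lemma aux_exp_rpow_integrableOn {c b : ℝ} (hc : 0 < c) (hb : -1 < b) :
    IntegrableOn (fun x : ℝ => Real.exp (-(c*x)) * x ^ b) (Ioi 0) := by
  have h := integrableOn_rpow_mul_exp_neg_mul_rpow (p := 1) hb one_pos hc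
  simp only [Real.rpow_one] at h
  refine h.congr_fun (fun x _ => ?_) measurableSet_Ioi
  beta_reduce
  rw [neg_mul]
  exact mul_comm _ _

lemma aux_gamma_integral {c p : ℝ} (hc : 0 < c) (hp : 0 < p) :
    ∫ x in Ioi (0:ℝ), Real.exp (-(c*x)) * x ^ (p-1) = c ^ (-p) * Real.Gamma p := by
  rw [show c ^ (-p) = (1/c) ^ p by
    rw [one_div, Real.rpow_neg hc.le, ← Real.inv_rpow hc.le]]
  rw [← Real.integral_rpow_mul_exp_neg_mul_Ioi hp hc]
  exact setIntegral_congr_fun measurableSet_Ioi fun x hx => mul_comm _ _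

lemma aux_exp_integral {c : ℝ} (hc : 0 < c) :
    ∫ x in Ioi (0:ℝ), Real.exp (-(c*x)) = c⁻¹ := by
  have h := aux_gamma_integral hc one_pos
  simp only [sub_self, Real.Gamma_one, mul_one, Real.rpow_zero, Real.rpow_neg_one] at h
  exact h

theorem gamma_double_integral (a H : ℝ) (ha : 0 < a) (hH1 : 1/2 < H) (hH2 : H < 1) :
    (2*H - 1) * ∫ t in Ioi (0:ℝ), ∫ s in Ioi (0:ℝ),
        Real.exp (-a*(t+s)) * |t - s| ^ (2*H - 2) =
      a ^ (-(2*H)) * Real.Gamma (2*H) := by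
  set b : ℝ := 2*H - 2 with hbdef
  have hp : 0 < 2*H - 1 := by linarith
  have hb1 : (-1:ℝ) < b := by rw [hbdef]; linarith
  have hq : 0 < b + 1 := by rw [hbdef]; linarith
  have h2a : 0 < 2*a := by linarith
  set C : ℝ := a ^ (-(2*H - 1)) * Real.Gamma (2*H - 1) with hCdef
  have hCint : ∫ x in Ioi (0:ℝ), Real.exp (-(a*x)) * x ^ b = C := by
    have h := aux_gamma_integral ha hp
    rw [show 2*H - 1 - 1 = b by rw [hbdef]; ring] at h
    exact h
  -- G and its basic properties
  have hfmeas : Measurable fun v : ℝ => Real.exp (a*v) * v ^ b := by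
    exact (Real.measurable_exp.comp (measurable_const.mul measurable_id)).mul
      (measurable_id.pow_const b)
  have hGint : ∀ s t : ℝ, IntervalIntegrable (fun v : ℝ => Real.exp (a*v) * v ^ b)
      volume s t := fun s t =>
    (intervalIntegral.intervalIntegrable_rpow' hb1).continuousOn_mul
      ((Real.continuous_exp.comp (continuous_const.mul continuous_id)).continuousOn)
  set G : ℝ → ℝ := fun t => ∫ v in (0:ℝ)..t, Real.exp (a*v) * v ^ b with hGdef
  have hGcont : Continuous G := intervalIntegral.continuous_primitive hGint 0
  have hGnonneg : ∀ t : ℝ, 0 ≤ t → 0 ≤ G t := by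
    intro t ht
    refine intervalIntegral.integral_nonneg ht fun u hu => ?_
    exact mul_nonneg (Real.exp_pos _).le (Real.rpow_nonneg hu.1 b)
  have hGbound : ∀ t : ℝ, 0 < t → G t ≤ Real.exp (a*t) * (t ^ (b+1) / (b+1)) := by
    intro t ht
    have h1 : G t ≤ ∫ v in (0:ℝ)..t, Real.exp (a*t) * v ^ b := by
      refine intervalIntegral.integral_mono_on ht.le (hGint 0 t)
        (((intervalIntegral.intervalIntegrable_rpow' hb1)).const_mul _) fun x hx => ?_
      have hax : a * x ≤ a * t := mul_le_mul_of_nonneg_left hx.2 ha.le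
      exact mul_le_mul_of_nonneg_right (Real.exp_le_exp.mpr hax)
        (Real.rpow_nonneg hx.1 b)
    refine h1.trans (le_of_eq ?_)
    rw [intervalIntegral.integral_const_mul, integral_rpow (Or.inl hb1),
      Real.zero_rpow hq.ne', sub_zero]
  -- inner integral
  have hinner : ∀ t ∈ Ioi (0:ℝ),
      (∫ s in Ioi (0:ℝ), Real.exp (-a*(t+s)) * |t - s| ^ b)
        = Real.exp (-(2*a)*t) * (G t + C) := by
    intro t ht
    have ht0 : (0:ℝ) < t := ht
    -- translation machinery
    have hadd : MeasurePreserving (fun u : ℝ => u + t) volume volume :=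
      measurePreserving_add_right volume t
    have hemb : MeasurableEmbedding (fun u : ℝ => u + t) :=
      (Homeomorph.addRight t).isClosedEmbedding.measurableEmbedding
    have hpre : (fun u : ℝ => u + t) ⁻¹' (Ioi t) = Ioi 0 := by
      rw [preimage_add_const_Ioi, sub_self]
    set gB : ℝ → ℝ := fun u => Real.exp (-(a*u)) * u ^ b with hgBdef
    have hgB0 : IntegrableOn gB (Ioi 0) := aux_exp_rpow_integrableOn ha hb1
    have hBint : IntegrableOn (fun s : ℝ => gB (s - t)) (Ioi t) := by
      have h := ((hadd.restrict_preimage_emb hemb (Ioi t)).integrable_comp_emb hemb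
        (g := fun s : ℝ => gB (s - t)))
      rw [hpre] at h
      refine h.mp ?_
      have : ((fun s : ℝ => gB (s - t)) ∘ fun u : ℝ => u + t) = gB := by
        funext u; simp [Function.comp, add_sub_cancel_right]
      rw [this]
      exact hgB0
    have hBeq : ∫ s in Ioi t, gB (s - t) = ∫ u in Ioi 0, gB u := by
      rw [← hadd.setIntegral_preimage_emb hemb (fun s => gB (s - t)) (Ioi t), hpre]
      refine setIntegral_congr_fun measurableSet_Ioi fun u hu => ?_
      simp [add_sub_cancel_right]
    -- integrand
    set f : ℝ → ℝ := fun s => Real.exp (-a*(t+s)) * |t - s| ^ b with hfdef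
    -- part A integrability
    have hAii : IntervalIntegrable (fun s : ℝ => Real.exp (-a*(t+s)) * (t - s) ^ b)
        volume 0 t := by
      have h1 : IntervalIntegrable (fun s : ℝ => (t - s) ^ b) volume 0 t := by
        have := (intervalIntegral.intervalIntegrable_rpow' (a := 0) (b := t) hb1).comp_sub_left t
        simpa using this.symm
      exact h1.continuousOn_mul
        ((Real.continuous_exp.comp (continuous_const.mul
          (continuous_const.add continuous_id))).continuousOn)
    have hAint : IntegrableOn (fun s : ℝ => Real.exp (-a*(t+s)) * (t - s) ^ b) (Ioo 0 t) := by
      rw [← intervalIntegrable_iff_integrableOn_Ioo_of_le ht0.le]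
      exact hAii
    have hfA : IntegrableOn f (Ioo 0 t) := by
      refine hAint.congr_fun (fun s hs => ?_) measurableSet_Ioo
      rw [hfdef]
      simp only []
      rw [abs_of_pos (by linarith [hs.2] : (0:ℝ) < t - s)]
    -- eq on Ioi t
    have hEqB : ∀ s : ℝ, t < s → f s = Real.exp (-(2*a)*t) * gB (s - t) := by
      intro s hs
      rw [hfdef, hgBdef]
      simp only []
      rw [abs_of_neg (by linarith : t - s < 0), neg_sub,
        show -a*(t+s) = -(2*a)*t + -(a*(s-t)) by ring, Real.exp_add, mul_assoc]
    have hfB : IntegrableOn f (Ici t) := by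
      rw [integrableOn_Ici_iff_integrableOn_Ioi]
      have h' : IntegrableOn (fun s : ℝ => Real.exp (-(2*a)*t) * gB (s - t)) (Ioi t) :=
        hBint.const_mul _
      exact h'.congr_fun (fun s hs => (hEqB s hs).symm) measurableSet_Ioi
    -- split
    have hsplit : Ioi (0:ℝ) = Ioo 0 t ∪ Ici t := (Ioo_union_Ici_eq_Ioi ht0).symm
    have hdisj : Disjoint (Ioo (0:ℝ) t) (Ici t) :=
      (Iio_disjoint_Ici le_rfl).mono_left Ioo_subset_Iio_self
    have : ∫ s in Ioi (0:ℝ), f s = (∫ s in Ioo (0:ℝ) t, f s) + ∫ s in Ici t, f s := by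
      rw [hsplit, setIntegral_union hdisj measurableSet_Ici hfA hfB]
    rw [this]
    -- part A value
    have hA : ∫ s in Ioo (0:ℝ) t, f s = Real.exp (-(2*a)*t) * G t := by
      have e1 : ∫ s in Ioo (0:ℝ) t, f s
          = ∫ s in Ioo (0:ℝ) t, Real.exp (-a*(t+s)) * (t - s) ^ b := by
        refine setIntegral_congr_fun measurableSet_Ioo fun s hs => ?_
        rw [hfdef]
        simp only []
        rw [abs_of_pos (by linarith [hs.2] : (0:ℝ) < t - s)]
      rw [e1, ← integral_Ioc_eq_integral_Ioo,
        ← intervalIntegral.integral_of_le ht0.le]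
      have e2 : (fun s : ℝ => Real.exp (-a*(t+s)) * (t - s) ^ b)
          = fun s : ℝ => (fun v : ℝ => Real.exp (-a*(2*t - v)) * v ^ b) (t - s) := by
        funext s
        ring_nf
      rw [e2, intervalIntegral.integral_comp_sub_left
        (fun v : ℝ => Real.exp (-a*(2*t - v)) * v ^ b) t, sub_self, sub_zero]
      have e3 : (fun v : ℝ => Real.exp (-a*(2*t - v)) * v ^ b)
          = fun v : ℝ => Real.exp (-(2*a)*t) * (Real.exp (a*v) * v ^ b) := by
        funext v
        rw [show -a*(2*t - v) = -(2*a)*t + a*v by ring, Real.exp_add, mul_assoc]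
      rw [e3, intervalIntegral.integral_const_mul]
    -- part B value
    have hB : ∫ s in Ici t, f s = Real.exp (-(2*a)*t) * C := by
      rw [integral_Ici_eq_integral_Ioi]
      have e1 : ∫ s in Ioi t, f s
          = ∫ s in Ioi t, Real.exp (-(2*a)*t) * gB (s - t) :=
        setIntegral_congr_fun measurableSet_Ioi fun s hs => hEqB s hs
      rw [e1, integral_const_mul, hBeq, hCint]
    rw [hA, hB, mul_add]
  -- rewrite outer integral
  have houter : (∫ t in Ioi (0:ℝ), ∫ s in Ioi (0:ℝ), Real.exp (-a*(t+s)) * |t - s| ^ b)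
      = ∫ t in Ioi (0:ℝ), Real.exp (-(2*a)*t) * (G t + C) :=
    setIntegral_congr_fun measurableSet_Ioi hinner
  -- integrability of outer pieces
  have hI2 : IntegrableOn (fun t : ℝ => Real.exp (-(2*a)*t) * C) (Ioi 0) :=
    (exp_neg_integrableOn_Ioi 0 h2a).mul_const C
  have hDom : IntegrableOn
      (fun t : ℝ => Real.exp (-(a*t)) * t ^ (b+1) * (b+1)⁻¹) (Ioi 0) :=
    (aux_exp_rpow_integrableOn ha (by linarith : (-1:ℝ) < b+1)).mul_const _
  have hbound : ∀ t : ℝ, 0 < t →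
      Real.exp (-(2*a)*t) * G t ≤ Real.exp (-(a*t)) * t ^ (b+1) * (b+1)⁻¹ := by
    intro t ht
    have h1 : Real.exp (-(2*a)*t) * G t
        ≤ Real.exp (-(2*a)*t) * (Real.exp (a*t) * (t ^ (b+1) / (b+1))) :=
      mul_le_mul_of_nonneg_left (hGbound t ht) (Real.exp_pos _).le
    refine h1.trans (le_of_eq ?_)
    rw [show -(a*t) = -(2*a)*t + a*t by ring, Real.exp_add, div_eq_mul_inv]
    ring
  have hI1 : IntegrableOn (fun t : ℝ => Real.exp (-(2*a)*t) * G t) (Ioi 0) := by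
    refine Integrable.mono' hDom
      (((Real.continuous_exp.comp (continuous_const.mul continuous_id)).mul
        hGcont).aestronglyMeasurable.restrict) ?_
    rw [ae_restrict_iff' measurableSet_Ioi]
    filter_upwards with t
    intro ht
    rw [Real.norm_eq_abs, abs_of_nonneg (mul_nonneg (Real.exp_pos _).le (hGnonneg t ht.le))]
    exact hbound t ht
  -- value of the constant piece
  have hval2 : ∫ t in Ioi (0:ℝ), Real.exp (-(2*a)*t) * C = (2*a)⁻¹ * C := by
    rw [integral_mul_const]
    have : ∫ t in Ioi (0:ℝ), Real.exp (-(2*a)*t) = (2*a)⁻¹ := by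
      rw [← aux_exp_integral h2a]
      refine setIntegral_congr_fun measurableSet_Ioi fun t ht => ?_
      rw [neg_mul]
    rw [this, mul_comm]
  -- FTC part
  have hval1 : ∫ t in Ioi (0:ℝ), Real.exp (-(2*a)*t) * G t = (2*a)⁻¹ * C := by
    set Ψ : ℝ → ℝ := fun t => -(2*a)⁻¹ * (Real.exp (-(2*a)*t) * G t) with hΨdef
    have hΨcont : Continuous Ψ :=
      continuous_const.mul ((Real.continuous_exp.comp
        (continuous_const.mul continuous_id)).mul hGcont)
    have hΨ0 : Ψ 0 = 0 := by
      rw [hΨdef]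
      simp [hGdef, intervalIntegral.integral_same]
    have hΨderiv : ∀ t ∈ Ioi (0:ℝ), HasDerivAt Ψ
        (Real.exp (-(2*a)*t) * G t - (2*a)⁻¹ * (Real.exp (-(a*t)) * t ^ b)) t := by
      intro t ht
      have ht0 : (0:ℝ) < t := ht
      have hG' : HasDerivAt G (Real.exp (a*t) * t ^ b) t := by
        refine intervalIntegral.integral_hasDerivAt_right (hGint 0 t)
          (hfmeas.stronglyMeasurable.stronglyMeasurableAtFilter) ?_
        exact ((Real.continuous_exp.comp (continuous_const.mul continuous_id)).continuousAt).mul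
          (Real.continuousAt_rpow_const t b (Or.inl ht0.ne'))
      have hE : HasDerivAt (fun u : ℝ => Real.exp (-(2*a)*u))
          (-(2*a) * Real.exp (-(2*a)*t)) t := by
        have h1 : HasDerivAt (fun u : ℝ => -(2*a)*u) (-(2*a)) t := by
          simpa using (hasDerivAt_id t).const_mul (-(2*a))
        have := (Real.hasDerivAt_exp (-(2*a)*t)).comp t h1
        exact this.congr_deriv (by ring)
      have := ((hE.mul hG').const_mul (-(2*a)⁻¹))
      refine this.congr_deriv ?_
      rw [show -(a*t) = -(2*a)*t + a*t by ring, Real.exp_add]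
      field_simp
      ring
    have hΨtend : Tendsto Ψ atTop (𝓝 0) := by
      have hg : Tendsto (fun t : ℝ => (2*a)⁻¹ * (b+1)⁻¹ * (t ^ (b+1) * Real.exp (-a * t)))
          atTop (𝓝 0) := by
        have := (tendsto_rpow_mul_exp_neg_mul_atTop_nhds_zero (b+1) a ha).const_mul
          ((2*a)⁻¹ * (b+1)⁻¹)
        simpa using this
      refine squeeze_zero_norm' ?_ hg
      filter_upwards [eventually_gt_atTop (0:ℝ)] with t ht
      have hnn : 0 ≤ Real.exp (-(2*a)*t) * G t :=
        mul_nonneg (Real.exp_pos _).le (hGnonneg t ht.le)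
      rw [hΨdef]
      simp only []
      rw [Real.norm_eq_abs, abs_mul, abs_of_nonneg hnn, abs_neg, abs_inv,
        abs_of_pos h2a]
      have h1 := hbound t ht
      calc (2*a)⁻¹ * (Real.exp (-(2*a)*t) * G t)
          ≤ (2*a)⁻¹ * (Real.exp (-(a*t)) * t ^ (b+1) * (b+1)⁻¹) :=
            mul_le_mul_of_nonneg_left h1 (by positivity)
        _ = (2*a)⁻¹ * (b+1)⁻¹ * (t ^ (b+1) * Real.exp (-a * t)) := by
            rw [neg_mul]; ring
    have hint' : IntegrableOn
        (fun t : ℝ => (2*a)⁻¹ * (Real.exp (-(a*t)) * t ^ b)) (Ioi 0) :=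
      (aux_exp_rpow_integrableOn ha hb1).const_mul _
    have hFTC := integral_Ioi_of_hasDerivAt_of_tendsto (a := 0)
      (hΨcont.continuousWithinAt) hΨderiv (hI1.sub hint') hΨtend
    rw [integral_sub hI1 hint', hΨ0, sub_zero, integral_const_mul, hCint] at hFTC
    linarith
  -- conclude
  rw [houter]
  have hsum : ∫ t in Ioi (0:ℝ), Real.exp (-(2*a)*t) * (G t + C)
      = (2*a)⁻¹ * C + (2*a)⁻¹ * C := by
    have : (fun t : ℝ => Real.exp (-(2*a)*t) * (G t + C))
        = fun t : ℝ => Real.exp (-(2*a)*t) * G t + Real.exp (-(2*a)*t) * C := by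
      funext t; ring
    rw [this, integral_add hI1 hI2, hval1, hval2]
  rw [hsum, hCdef]
  have hGamma : Real.Gamma (2*H) = (2*H - 1) * Real.Gamma (2*H - 1) := by
    rw [show (2*H : ℝ) = (2*H - 1) + 1 by ring, Real.Gamma_add_one hp.ne']
    norm_num
  rw [hGamma, show -(2*H) = (-(2*H - 1)) + (-1) by ring, Real.rpow_add ha,
    Real.rpow_neg_one]
  field_simp
  ring
end

section
/- Let a > 0, H ∈ (1/2,1), and define m(T) = H(2H-1) ∫_0^T ∫_0^T e^{-au} e^{-av} |u-v|^{2H-2} du dv for T ≥ 0. Then m(T) converges to a^{-2H} H Γ(2H) as T → ∞. -/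
open MeasureTheory Real Set Filter intervalIntegral
open scoped ENNReal

lemma shift_lintegral (v : ℝ) (f : ℝ → ℝ≥0∞) :
    ∫⁻ u in Ioi v, f u = ∫⁻ w in Ioi 0, f (w + v) := by
  rw [← lintegral_indicator measurableSet_Ioi, ← lintegral_indicator measurableSet_Ioi,
    ← lintegral_add_right_eq_self (fun x => (Ioi v).indicator f x) v]
  refine lintegral_congr fun w => ?_
  by_cases h : (0:ℝ) < w <;>
    simp [Set.indicator_apply, Set.mem_Ioi, lt_add_iff_pos_left, h]

theorem variance_limit (a H : ℝ) (ha : 0 < a) (hH1 : 1/2 < H) (hH2 : H < 1) :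
    Tendsto
      (fun T : ℝ => H * (2*H - 1) *
        ∫ u in (0:ℝ)..T, ∫ v in (0:ℝ)..T,
          Real.exp (-(a*u)) * Real.exp (-(a*v)) * |u - v| ^ (2*H - 2))
      atTop (nhds (a ^ (-(2*H)) * H * Real.Gamma (2*H))) := by
  have hs : 0 < 2*H - 1 := by linarith
  have hb1 : (-1:ℝ) < 2*H - 2 := by linarith
  have hFm : Measurable (fun p : ℝ × ℝ =>
      Real.exp (-(a*p.1)) * Real.exp (-(a*p.2)) * |p.1 - p.2| ^ (2*H-2)) := by fun_prop
  set Φ : ℝ × ℝ → ℝ≥0∞ := fun p =>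
      ENNReal.ofReal (Real.exp (-(a*p.1)) * Real.exp (-(a*p.2)) * |p.1 - p.2| ^ (2*H-2))
    with hΦdef
  have hΦm : Measurable Φ := hFm.ennreal_ofReal
  have hFnn : ∀ u v : ℝ,
      0 ≤ Real.exp (-(a*u)) * Real.exp (-(a*v)) * |u - v| ^ (2*H-2) := fun u v => by positivity
  have hsymm : ∀ u v : ℝ, Φ (u, v) = Φ (v, u) := by
    intro u v
    simp only [hΦdef]
    congr 1
    rw [abs_sub_comm]
    ring
  -- the one-dimensional Gamma-type integral
  have hInt1 : IntegrableOn (fun w : ℝ => w ^ (2*H-2) * Real.exp (-(a*w))) (Ioi 0) := by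
    have h := integrableOn_rpow_mul_exp_neg_mul_rpow hb1 (zero_lt_one : (0:ℝ) < 1) ha
    simpa [Real.rpow_one, neg_mul] using h
  set c : ℝ≥0∞ := ∫⁻ w in Ioi 0, ENNReal.ofReal (w ^ (2*H-2) * Real.exp (-(a*w))) with hcdef
  have hc : c = ENNReal.ofReal ((1/a) ^ (2*H-1) * Real.Gamma (2*H-1)) := by
    rw [hcdef, ← ofReal_integral_eq_lintegral_ofReal hInt1
      ((ae_restrict_iff' measurableSet_Ioi).mpr (Filter.Eventually.of_forall
        fun w hw => by have : (0:ℝ) < w := hw; positivity))]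
    congr 1
    have h := Real.integral_rpow_mul_exp_neg_mul_Ioi hs ha
    rw [show 2*H-1-1 = 2*H-2 by ring] at h
    exact h
  have hexpInt : IntegrableOn (fun v : ℝ => Real.exp (-(2*a*v))) (Ioi 0) := by
    simpa [neg_mul] using exp_neg_integrableOn_Ioi 0 (by linarith : (0:ℝ) < 2*a)
  have hexpVal : ∫ v in Ioi 0, Real.exp (-(2*a*v)) = 1/(2*a) := by
    have h := Real.integral_rpow_mul_exp_neg_mul_Ioi (by norm_num : (0:ℝ) < 1)
      (by linarith : (0:ℝ) < 2*a)
    simpa using h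
  have hE : ∫⁻ v in Ioi 0, ENNReal.ofReal (Real.exp (-(2*a*v))) = ENNReal.ofReal (1/(2*a)) := by
    rw [← ofReal_integral_eq_lintegral_ofReal hexpInt
      (Filter.Eventually.of_forall fun v => (Real.exp_pos _).le), hexpVal]
  -- inner integral of Q
  have hcm : Measurable fun w : ℝ => ENNReal.ofReal (w ^ (2*H-2) * Real.exp (-(a*w))) := by
    fun_prop
  have hQin : ∀ v : ℝ, 0 < v →
      ∫⁻ u in Ioi v, Φ (u, v) = ENNReal.ofReal (Real.exp (-(2*a*v))) * c := by
    intro v hv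
    rw [shift_lintegral v (fun u => Φ (u, v))]
    calc ∫⁻ w in Ioi 0, Φ (w + v, v)
        = ∫⁻ w in Ioi 0, ENNReal.ofReal (Real.exp (-(2*a*v)))
            * ENNReal.ofReal (w ^ (2*H-2) * Real.exp (-(a*w))) := by
          refine setLIntegral_congr_fun measurableSet_Ioi
            (fun w hw => ?_)
          have hw0 : (0:ℝ) < w := hw
          have habs : |w + v - v| = w := by
            rw [add_sub_cancel_right, abs_of_pos hw0]
          have h1 : Real.exp (-(a*(w+v))) = Real.exp (-(a*w)) * Real.exp (-(a*v)) := by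
            rw [← Real.exp_add]; congr 1; ring
          have h2 : Real.exp (-(2*a*v)) = Real.exp (-(a*v)) * Real.exp (-(a*v)) := by
            rw [← Real.exp_add]; congr 1; ring
          simp only [hΦdef]
          rw [← ENNReal.ofReal_mul (Real.exp_pos _).le]
          congr 1
          rw [habs, h1, h2]
          ring
      _ = ENNReal.ofReal (Real.exp (-(2*a*v))) * c := by
          rw [lintegral_const_mul _ hcm, hcdef]
  have hQ : ∫⁻ v in Ioi 0, ∫⁻ u in Ioi v, Φ (u, v) = ENNReal.ofReal (1/(2*a)) * c := by
    rw [← hE, ← lintegral_mul_const _ (by fun_prop :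
      Measurable fun v : ℝ => ENNReal.ofReal (Real.exp (-(2*a*v))))]
    exact setLIntegral_congr_fun measurableSet_Ioi
      (fun v hv => hQin v hv)
  -- triangle swap: P = Q
  set f : ℝ → ℝ → ℝ≥0∞ := fun v u => (Iic v).indicator (fun u' => Φ (u', v)) u with hfdef
  have hfm : Measurable (Function.uncurry f) := by
    have heq : Function.uncurry f
        = Set.indicator {p : ℝ × ℝ | p.2 ≤ p.1} (fun p => Φ (p.2, p.1)) := by
      ext p
      by_cases h : p.2 ≤ p.1 <;>
        simp [Function.uncurry, hfdef, Set.indicator_apply, h]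
    rw [heq]
    exact (hΦm.comp (measurable_snd.prodMk measurable_fst)).indicator
      (measurableSet_le measurable_snd measurable_fst)
  have hLf0 : ∀ v : ℝ, ∫⁻ u in Ioi 0, f v u = ∫⁻ u in Ioc 0 v, Φ (u, v) := by
    intro v
    simp only [hfdef]
    rw [lintegral_indicator measurableSet_Iic, Measure.restrict_restrict measurableSet_Iic,
      Iic_inter_Ioi]
  have hPQ : (∫⁻ v in Ioi 0, ∫⁻ u in Ioc 0 v, Φ (u, v))
      = ∫⁻ v in Ioi 0, ∫⁻ u in Ioi v, Φ (u, v) := by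
    have hswap := lintegral_lintegral_swap (μ := volume.restrict (Ioi (0:ℝ)))
      (ν := volume.restrict (Ioi (0:ℝ))) hfm.aemeasurable
    have hR : ∀ u : ℝ, 0 < u → ∫⁻ v in Ioi 0, f v u = ∫⁻ v in Ioi u, Φ (v, u) := by
      intro u hu
      have h1 : ∀ v : ℝ, f v u = (Ici u).indicator (fun v' => Φ (u, v')) v := by
        intro v
        by_cases h : u ≤ v <;> simp [hfdef, Set.indicator_apply, h]
      rw [lintegral_congr h1, lintegral_indicator measurableSet_Ici,
        Measure.restrict_restrict measurableSet_Ici]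
      have hIci : Ici u ∩ Ioi (0:ℝ) = Ici u :=
        inter_eq_left.mpr fun x hx => lt_of_lt_of_le hu hx
      rw [hIci, setLIntegral_congr (Ioi_ae_eq_Ici (μ := volume) (a := u)).symm]
      exact lintegral_congr fun v => hsymm u v
    calc (∫⁻ v in Ioi 0, ∫⁻ u in Ioc 0 v, Φ (u, v))
        = ∫⁻ v in Ioi 0, ∫⁻ u in Ioi 0, f v u := lintegral_congr fun v => (hLf0 v).symm
      _ = ∫⁻ u in Ioi 0, ∫⁻ v in Ioi 0, f v u := hswap
      _ = ∫⁻ u in Ioi 0, ∫⁻ v in Ioi u, Φ (v, u) :=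
          setLIntegral_congr_fun measurableSet_Ioi
            (fun u hu => hR u hu)
  -- value of the quadrant integral
  set L : ℝ≥0∞ := ∫⁻ p in (Ioi (0:ℝ)) ×ˢ (Ioi (0:ℝ)), Φ p with hLdef
  have hPm : Measurable fun v : ℝ => ∫⁻ u in Ioi 0, f v u :=
    Measurable.lintegral_prod_right (ν := volume.restrict (Ioi (0:ℝ))) hfm
  have hLval : L = ENNReal.ofReal ((1/a) * ((1/a) ^ (2*H-1) * Real.Gamma (2*H-1))) := by
    have hiter : L = ∫⁻ v in Ioi 0, ∫⁻ u in Ioi 0, Φ (u, v) := by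
      rw [hLdef, Measure.volume_eq_prod, ← Measure.prod_restrict,
        lintegral_prod_symm Φ hΦm.aemeasurable]
    rw [hiter]
    have hsplit : ∫⁻ v in Ioi 0, ∫⁻ u in Ioi 0, Φ (u, v)
        = ∫⁻ v in Ioi 0, ((∫⁻ u in Ioi 0, f v u) + ∫⁻ u in Ioi v, Φ (u, v)) := by
      refine setLIntegral_congr_fun measurableSet_Ioi
        (fun v hv => ?_)
      have hv0 : (0:ℝ) < v := hv
      rw [hLf0 v, ← Ioc_union_Ioi_eq_Ioi hv0.le,
        lintegral_union measurableSet_Ioi (Ioc_disjoint_Ioi le_rfl)]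
    rw [hsplit, lintegral_add_left hPm]
    rw [lintegral_congr hLf0, hPQ, hQ, hc, ← ENNReal.ofReal_mul (by positivity),
      ← ENNReal.ofReal_add (by positivity) (by positivity)]
    congr 1
    have h2a : (2*a) ≠ 0 := by positivity
    field_simp
    ring
  have hLne : L ≠ ⊤ := by rw [hLval]; exact ENNReal.ofReal_ne_top
  -- squares
  set sq : ℝ → Set (ℝ × ℝ) := fun T => (Ioc (0:ℝ) T) ×ˢ (Ioc (0:ℝ) T) with hsqdef
  set Lf : ℝ → ℝ≥0∞ := fun T => ∫⁻ p in sq T, Φ p with hLfdef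
  have hsm : ∀ T, MeasurableSet (sq T) := fun T => measurableSet_Ioc.prod measurableSet_Ioc
  have hmono : Monotone Lf := fun T1 T2 h =>
    lintegral_mono_set (prod_mono (Ioc_subset_Ioc_right h) (Ioc_subset_Ioc_right h))
  have hsqsub : ∀ T, sq T ⊆ (Ioi (0:ℝ)) ×ˢ (Ioi (0:ℝ)) := fun T =>
    prod_mono Ioc_subset_Ioi_self Ioc_subset_Ioi_self
  have hleL : ∀ T, Lf T ≤ L := fun T => lintegral_mono_set (hsqsub T)
  have hUnion : Tendsto (fun n : ℕ => Lf n) atTop (nhds L) := by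
    have hsup : (⨆ n : ℕ, Lf (n : ℝ)) = L := by
      have h1 : ∀ n : ℕ, Lf (n : ℝ) = ∫⁻ p, (sq (n : ℝ)).indicator Φ p := fun n =>
        (lintegral_indicator (hsm _) Φ).symm
      have hmono2 : Monotone fun n : ℕ => (sq (n : ℝ)).indicator Φ := fun m n h =>
        Set.indicator_le_indicator_of_subset
          (prod_mono (Ioc_subset_Ioc_right (by exact_mod_cast h))
            (Ioc_subset_Ioc_right (by exact_mod_cast h))) (fun p => zero_le)
      calc (⨆ n : ℕ, Lf (n : ℝ))
          = ⨆ n : ℕ, ∫⁻ p, (sq (n : ℝ)).indicator Φ p := by exact iSup_congr h1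
        _ = ∫⁻ p, ⨆ n : ℕ, (sq (n : ℝ)).indicator Φ p :=
            (lintegral_iSup (fun n => hΦm.indicator (hsm _)) hmono2).symm
        _ = ∫⁻ p, ((Ioi (0:ℝ)) ×ˢ (Ioi (0:ℝ))).indicator Φ p := by
            refine lintegral_congr fun p => ?_
            by_cases hp : p ∈ (Ioi (0:ℝ)) ×ˢ (Ioi (0:ℝ))
            · rw [Set.indicator_of_mem hp]
              refine le_antisymm (iSup_le fun n =>
                Set.indicator_le_self' (fun _ _ => zero_le) p) ?_
              refine le_iSup_of_le ⌈max p.1 p.2⌉₊ ?_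
              rw [Set.indicator_of_mem]
              exact ⟨⟨hp.1, le_trans (le_max_left _ _) (Nat.le_ceil _)⟩,
                ⟨hp.2, le_trans (le_max_right _ _) (Nat.le_ceil _)⟩⟩
            · rw [Set.indicator_of_notMem hp]
              refine le_antisymm (iSup_le fun n => ?_) (zero_le)
              rw [Set.indicator_of_notMem fun hmem => hp (hsqsub _ hmem)]
        _ = L := lintegral_indicator (measurableSet_Ioi.prod measurableSet_Ioi) Φ
    rw [← hsup]
    exact tendsto_atTop_iSup fun m n h => hmono (by exact_mod_cast h)
  -- identity between interval integral and Lf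
  have hIden : ∀ T : ℝ, 0 ≤ T →
      (∫ u in (0:ℝ)..T, ∫ v in (0:ℝ)..T,
        Real.exp (-(a*u)) * Real.exp (-(a*v)) * |u - v| ^ (2*H-2)) = (Lf T).toReal := by
    intro T hT
    have hK : ∀ u : ℝ, (∫ v in (0:ℝ)..T,
        Real.exp (-(a*u)) * Real.exp (-(a*v)) * |u - v| ^ (2*H-2))
        = (∫⁻ v in Ioc 0 T, Φ (u, v)).toReal := by
      intro u
      rw [intervalIntegral.integral_of_le hT,
        integral_eq_lintegral_of_nonneg_ae (Filter.Eventually.of_forall fun v => hFnn u v)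
          ((hFm.comp (measurable_const.prodMk measurable_id)).aestronglyMeasurable)]
    have hKm : Measurable fun u => ∫⁻ v in Ioc 0 T, Φ (u, v) :=
      Measurable.lintegral_prod_right (f := fun u v => Φ (u, v))
        (ν := volume.restrict (Ioc 0 T)) hΦm
    have hprod : ∫⁻ u in Ioc 0 T, ∫⁻ v in Ioc 0 T, Φ (u, v) = Lf T := by
      rw [hLfdef]
      simp only [hsqdef]
      rw [Measure.volume_eq_prod, ← Measure.prod_restrict, lintegral_prod _ hΦm.aemeasurable]
    have hfin : ∀ᵐ u ∂(volume.restrict (Ioc (0:ℝ) T)), (∫⁻ v in Ioc 0 T, Φ (u, v)) < ⊤ := by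
      apply ae_lt_top hKm
      rw [hprod]
      exact (lt_of_le_of_lt (hleL T) hLne.lt_top).ne
    rw [intervalIntegral.integral_of_le hT]
    rw [integral_congr_ae (Filter.Eventually.of_forall fun u => hK u)]
    rw [integral_eq_lintegral_of_nonneg_ae
      (Filter.Eventually.of_forall fun u => ENNReal.toReal_nonneg)
      hKm.ennreal_toReal.aestronglyMeasurable]
    rw [← hprod]
    congr 1
    apply lintegral_congr_ae
    filter_upwards [hfin] with u hu
    rw [ENNReal.ofReal_toReal hu.ne]
  -- final limit
  have hfl : Tendsto (fun T : ℝ => (Lf T).toReal) atTop (nhds L.toReal) := by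
    have hn : Tendsto (fun n : ℕ => (Lf (n:ℝ)).toReal) atTop (nhds L.toReal) :=
      (ENNReal.tendsto_toReal hLne).comp hUnion
    have hlow : Tendsto (fun T : ℝ => (Lf (⌊T⌋₊ : ℝ)).toReal) atTop (nhds L.toReal) :=
      hn.comp tendsto_nat_floor_atTop
    refine tendsto_of_tendsto_of_tendsto_of_le_of_le' hlow tendsto_const_nhds ?_ ?_
    · filter_upwards [eventually_ge_atTop (0:ℝ)] with T hT
      exact ENNReal.toReal_mono (lt_of_le_of_lt (hleL T) hLne.lt_top).ne
        (hmono (Nat.floor_le hT))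
    · filter_upwards with T
      exact ENNReal.toReal_mono hLne (hleL T)
  have hmain : Tendsto (fun T : ℝ => H * (2*H-1) * (Lf T).toReal) atTop
      (nhds (H * (2*H-1) * L.toReal)) := hfl.const_mul _
  have hconst : H * (2*H-1) * L.toReal = a ^ (-(2*H)) * H * Real.Gamma (2*H) := by
    rw [hLval, ENNReal.toReal_ofReal (by positivity)]
    have hg : Real.Gamma (2*H) = (2*H-1) * Real.Gamma (2*H-1) := by
      have h := Real.Gamma_add_one (ne_of_gt hs)
      rw [show 2*H-1+1 = 2*H by ring] at h
      exact h
    have hpow : (1/a) * (1/a) ^ (2*H-1) = a ^ (-(2*H)) := by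
      rw [one_div, Real.inv_rpow ha.le, ← Real.rpow_neg ha.le, ← Real.rpow_neg_one a,
        ← Real.rpow_add ha]
      congr 1
      ring
    calc H * (2*H-1) * ((1/a) * ((1/a) ^ (2*H-1) * Real.Gamma (2*H-1)))
        = ((1/a) * (1/a) ^ (2*H-1)) * (H * ((2*H-1) * Real.Gamma (2*H-1))) := by ring
      _ = a ^ (-(2*H)) * H * Real.Gamma (2*H) := by rw [hpow, ← hg]; ring
  rw [← hconst]
  refine hmain.congr' ?_
  filter_upwards [eventually_ge_atTop (0:ℝ)] with T hT
  rw [hIden T hT]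
end

section
/- Let a > 0, H ∈ (1/2,1), and set c = a^{-2H} H Γ(2H). Then |(1/T) ∫_0^T m(t) dt − c| ≤ C/T for all T ≥ 1, where m(t) = H(2H-1) ∫_0^t ∫_0^t e^{-au} e^{-av} |u-v|^{2H-2} du dv and C = (2H/a^{2H+1}) Γ(2H+1) (in particular, the error is O(1/T)). -/
open MeasureTheory Real Set Filter intervalIntegral

namespace BiasAux


lemma II {β : ℝ} (hβ : -1 < β) (c x y : ℝ) :
    IntervalIntegrable (fun w : ℝ => w ^ β * Real.exp (c * w)) volume x y :=
  (intervalIntegrable_rpow' hβ).mul_continuousOn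
    (Real.continuous_exp.comp (continuous_const.mul continuous_id)).continuousOn

lemma contP {β : ℝ} (hβ : -1 < β) (c : ℝ) :
    Continuous (fun t : ℝ => ∫ w in (0:ℝ)..t, w ^ β * Real.exp (c * w)) :=
  intervalIntegral.continuous_primitive (fun x y => II hβ c x y) 0

lemma derivP {β : ℝ} (hβ : -1 < β) (c : ℝ) {x : ℝ} (hx : 0 < x) :
    HasDerivAt (fun y : ℝ => ∫ w in (0:ℝ)..y, w ^ β * Real.exp (c * w))
      (x ^ β * Real.exp (c * x)) x := by
  apply intervalIntegral.integral_hasDerivAt_right (II hβ c 0 x)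
    ((by fun_prop : Measurable (fun w : ℝ => w ^ β * Real.exp (c * w))).stronglyMeasurable.stronglyMeasurableAtFilter)
  exact ((Real.continuousAt_rpow_const x β (Or.inl hx.ne')).mul (by fun_prop))

lemma parts {β : ℝ} (hβ : -1 < β) {d : ℝ} (hd : d ≠ 0) (c : ℝ) {t : ℝ} (ht : 0 ≤ t) :
    ∫ u in (0:ℝ)..t, Real.exp (d*u) * (∫ w in (0:ℝ)..u, w ^ β * Real.exp (c*w))
      = ((∫ w in (0:ℝ)..t, w ^ β * Real.exp ((c+d)*w))
          - Real.exp (d*t) * ∫ w in (0:ℝ)..t, w ^ β * Real.exp (c*w)) / (-d) := by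
  set P : ℝ → ℝ := fun x => ∫ w in (0:ℝ)..x, w ^ β * Real.exp (c*w) with hP
  set R : ℝ → ℝ := fun x => ∫ w in (0:ℝ)..x, w ^ β * Real.exp ((c+d)*w) with hR
  have key : ∫ u in (0:ℝ)..t, Real.exp (d*u) * P u
      = (fun x => (R x - Real.exp (d*x) * P x) / (-d)) t
        - (fun x => (R x - Real.exp (d*x) * P x) / (-d)) 0 := by
    apply intervalIntegral.integral_eq_sub_of_hasDerivAt_of_le ht
    · exact (((contP hβ (c+d)).sub
        ((Real.continuous_exp.comp (continuous_const.mul continuous_id)).mul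
          (contP hβ c))).div_const (-d)).continuousOn
    · intro x hx
      have h1 := derivP hβ (c+d) hx.1
      have h2 := derivP hβ c hx.1
      have h3 : HasDerivAt (fun x : ℝ => Real.exp (d*x)) (Real.exp (d*x) * (d*1)) x :=
        ((hasDerivAt_id x).const_mul d).exp
      have h4 := ((h1.sub (h3.mul h2)).div_const (-d))
      refine h4.congr_deriv ?_
      have hE : x ^ β * Real.exp ((c+d)*x) = Real.exp (d*x) * (x ^ β * Real.exp (c*x)) := by
        rw [show (c+d)*x = c*x + d*x by ring, Real.exp_add]; ring
      rw [hE]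
      field_simp
      ring
    · exact ((Real.continuous_exp.comp (continuous_const.mul continuous_id)).mul
        (contP hβ c)).intervalIntegrable 0 t
  have h0 : P 0 = 0 := intervalIntegral.integral_same
  have h0' : R 0 = 0 := intervalIntegral.integral_same
  rw [key]
  simp [h0, h0']
  rfl

lemma inner_eq {a β : ℝ} (hβ : -1 < β) {t u : ℝ} (hu : u ∈ Icc 0 t) :
    (∫ v in (0:ℝ)..t, Real.exp (-(a*u)) * Real.exp (-(a*v)) * |u - v| ^ β)
      = Real.exp ((-(2*a))*u) * (∫ w in (0:ℝ)..u, w ^ β * Real.exp (a*w))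
        + Real.exp ((-(2*a))*u) * (∫ w in (0:ℝ)..(t-u), w ^ β * Real.exp ((-a)*w)) := by
  obtain ⟨hu0, hut⟩ := hu
  have hrpow : ∀ x y : ℝ, IntervalIntegrable (fun w : ℝ => w ^ β) volume x y :=
    fun x y => intervalIntegrable_rpow' hβ
  have hIA : IntervalIntegrable (fun v => Real.exp (-(a*u)) * Real.exp (-(a*v)) * |u - v| ^ β)
      volume 0 u := by
    rw [intervalIntegrable_iff]
    have base : IntervalIntegrable (fun v : ℝ => (u - v) ^ β * (Real.exp (-(a*u)) * Real.exp (-(a*v))))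
        volume 0 u := by
      have h1 : IntervalIntegrable (fun v : ℝ => (u - v) ^ β) volume 0 u := by
        have := ((hrpow 0 u).comp_sub_left u).symm
        simpa using this
      exact h1.mul_continuousOn (by fun_prop)
    rw [intervalIntegrable_iff] at base
    apply base.congr_fun ?_ measurableSet_uIoc
    intro v hv
    rw [uIoc_of_le hu0] at hv
    dsimp only
    rw [abs_of_nonneg (by linarith [hv.2] : (0:ℝ) ≤ u - v)]
    ring
  have hIB : IntervalIntegrable (fun v => Real.exp (-(a*u)) * Real.exp (-(a*v)) * |u - v| ^ β)
      volume u t := by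
    rw [intervalIntegrable_iff]
    have base : IntervalIntegrable (fun v : ℝ => (v - u) ^ β * (Real.exp (-(a*u)) * Real.exp (-(a*v))))
        volume u t := by
      have h1 : IntervalIntegrable (fun v : ℝ => (v - u) ^ β) volume u t := by
        have := (hrpow 0 (t-u)).comp_sub_right u
        simpa using this
      exact h1.mul_continuousOn (by fun_prop)
    rw [intervalIntegrable_iff] at base
    apply base.congr_fun ?_ measurableSet_uIoc
    intro v hv
    rw [uIoc_of_le hut] at hv
    dsimp only
    rw [abs_of_nonpos (by linarith [hv.1] : u - v ≤ 0), show -(u-v) = v - u by ring]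
    ring
  rw [← intervalIntegral.integral_add_adjacent_intervals hIA hIB]
  congr 1
  · have e1 : ∀ v ∈ uIcc (0:ℝ) u, Real.exp (-(a*u)) * Real.exp (-(a*v)) * |u - v| ^ β
        = (fun w => Real.exp (-(a*u)) * Real.exp (-(a*(u-w))) * w ^ β) (u - v) := by
      intro v hv
      rw [uIcc_of_le hu0] at hv
      simp only [show u - (u - v) = v by ring]
      rw [abs_of_nonneg (by linarith [hv.2] : (0:ℝ) ≤ u - v)]
    rw [intervalIntegral.integral_congr e1,
      intervalIntegral.integral_comp_sub_left (fun w => Real.exp (-(a*u)) * Real.exp (-(a*(u-w))) * w ^ β) u]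
    simp only [sub_self, sub_zero]
    rw [← intervalIntegral.integral_const_mul]
    apply intervalIntegral.integral_congr
    intro w _
    simp only
    rw [mul_comm ((w:ℝ) ^ β) (Real.exp (a*w)), ← mul_assoc, ← Real.exp_add, ← Real.exp_add]
    congr 2
    ring
  · have e1 : ∀ v ∈ uIcc u t, Real.exp (-(a*u)) * Real.exp (-(a*v)) * |u - v| ^ β
        = (fun w => Real.exp (-(a*u)) * Real.exp (-(a*(w+u))) * w ^ β) (v - u) := by
      intro v hv
      rw [uIcc_of_le hut] at hv
      simp only [show v - u + u = v by ring]
      rw [abs_of_nonpos (by linarith [hv.1] : u - v ≤ 0), show -(u-v) = v - u by ring]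
    rw [intervalIntegral.integral_congr e1,
      intervalIntegral.integral_comp_sub_right (fun w => Real.exp (-(a*u)) * Real.exp (-(a*(w+u))) * w ^ β) u]
    simp only [sub_self]
    rw [← intervalIntegral.integral_const_mul]
    apply intervalIntegral.integral_congr
    intro w _
    simp only
    rw [mul_comm ((w:ℝ) ^ β) (Real.exp ((-a)*w)), ← mul_assoc, ← Real.exp_add, ← Real.exp_add]
    congr 2
    ring

-- the main representation
lemma rep {a β : ℝ} (ha : 0 < a) (hβ : -1 < β) {t : ℝ} (ht : 0 ≤ t) :
    (∫ u in (0:ℝ)..t, ∫ v in (0:ℝ)..t, Real.exp (-(a*u)) * Real.exp (-(a*v)) * |u - v| ^ β)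
      = ((∫ w in (0:ℝ)..t, w ^ β * Real.exp ((-a)*w))
          - Real.exp ((-(2*a))*t) * (∫ w in (0:ℝ)..t, w ^ β * Real.exp (a*w))) / a := by
  set P : ℝ → ℝ := fun x => ∫ w in (0:ℝ)..x, w ^ β * Real.exp (a*w) with hPdef
  set Q : ℝ → ℝ := fun x => ∫ w in (0:ℝ)..x, w ^ β * Real.exp ((-a)*w) with hQdef
  have hPc : Continuous P := contP hβ a
  have hQc : Continuous Q := contP hβ (-a)
  have step1 : (∫ u in (0:ℝ)..t, ∫ v in (0:ℝ)..t,
        Real.exp (-(a*u)) * Real.exp (-(a*v)) * |u - v| ^ β)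
      = ∫ u in (0:ℝ)..t, (Real.exp ((-(2*a))*u) * P u + Real.exp ((-(2*a))*u) * Q (t-u)) := by
    apply intervalIntegral.integral_congr
    intro u hu
    rw [uIcc_of_le ht] at hu
    exact inner_eq hβ hu
  rw [step1]
  have hI1 : IntervalIntegrable (fun u => Real.exp ((-(2*a))*u) * P u) volume 0 t :=
    (((Real.continuous_exp.comp (continuous_const.mul continuous_id)).mul hPc)).intervalIntegrable 0 t
  have hI2 : IntervalIntegrable (fun u => Real.exp ((-(2*a))*u) * Q (t-u)) volume 0 t := by
    apply Continuous.intervalIntegrable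
    exact (Real.continuous_exp.comp (continuous_const.mul continuous_id)).mul
      (hQc.comp (continuous_const.sub continuous_id))
  rw [intervalIntegral.integral_add hI1 hI2]
  -- first piece, by parts with d = -(2a), c = a
  have hd1 : (-(2*a)) ≠ 0 := by
    have : (0:ℝ) < 2*a := by linarith
    simpa using this.ne'
  have hd2 : (2*a) ≠ 0 := by positivity
  have e1 : ∫ u in (0:ℝ)..t, Real.exp ((-(2*a))*u) * P u
      = (Q t - Real.exp ((-(2*a))*t) * P t) / (2*a) := by
    have h := parts hβ hd1 a ht
    rw [show a + -(2*a) = -a by ring, neg_neg] at h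
    exact h
  have e2 : ∫ u in (0:ℝ)..t, Real.exp ((-(2*a))*u) * Q (t-u)
      = Real.exp ((-(2*a))*t) * ((P t - Real.exp ((2*a)*t) * Q t) / (-(2*a))) := by
    have s1 : ∫ u in (0:ℝ)..t, Real.exp ((-(2*a))*u) * Q (t-u)
        = ∫ u in (0:ℝ)..t, (fun s => Real.exp ((-(2*a))*(t-s)) * Q s) (t-u) := by
      apply intervalIntegral.integral_congr
      intro u _
      simp only
      rw [show t - (t-u) = u by ring]
    rw [s1, intervalIntegral.integral_comp_sub_left (fun s => Real.exp ((-(2*a))*(t-s)) * Q s) t]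
    simp only [sub_self, sub_zero]
    have s2 : ∀ s ∈ uIcc (0:ℝ) t, Real.exp ((-(2*a))*(t-s)) * Q s
        = Real.exp ((-(2*a))*t) * (Real.exp ((2*a)*s) * Q s) := by
      intro s _
      rw [← mul_assoc, ← Real.exp_add]
      congr 2
      ring
    rw [intervalIntegral.integral_congr s2, intervalIntegral.integral_const_mul]
    congr 1
    have h := parts hβ hd2 (-a) ht
    rw [show -a + 2*a = a by ring] at h
    exact h
  rw [e1, e2]
  have hE : Real.exp ((-(2*a))*t) * Real.exp ((2*a)*t) = 1 := by
    rw [← Real.exp_add, show (-(2*a))*t + (2*a)*t = 0 by ring, Real.exp_zero]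
  rw [show Real.exp ((-(2*a))*t) * ((P t - Real.exp ((2*a)*t) * Q t) / (-(2*a)))
      = (Real.exp ((-(2*a))*t) * P t - (Real.exp ((-(2*a))*t) * Real.exp ((2*a)*t)) * Q t) / (-(2*a)) by ring,
    hE]
  have final : ∀ (q p e : ℝ), (q - e*p)/(2*a) + (e*p - 1*q)/(-(2*a)) = (q - e*p)/a := by
    intro q p e
    field_simp
    ring
  exact final (Q t) (P t) (Real.exp ((-(2*a))*t))



lemma tail_int {a β : ℝ} (ha : 0 < a) (hβ : -1 < β) :
    IntegrableOn (fun w : ℝ => w ^ β * Real.exp ((-a)*w)) (Ioi 0) := by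
  have := integrableOn_rpow_mul_exp_neg_mul_rpow hβ one_pos ha
  simpa [Real.rpow_one, neg_mul] using this

lemma tail_val {a β : ℝ} (ha : 0 < a) (hβ : -1 < β) :
    ∫ w in Ioi (0:ℝ), w ^ β * Real.exp ((-a)*w) = (1/a) ^ (β+1) * Real.Gamma (β+1) := by
  have := Real.integral_rpow_mul_exp_neg_mul_Ioi (show 0 < β + 1 by linarith) ha
  simp only [add_sub_cancel_right] at this
  simpa [neg_mul] using this

lemma exp_int_Ioi {a : ℝ} (ha : 0 < a) (t : ℝ) :
    ∫ w in Ioi t, Real.exp ((-a)*w) = Real.exp ((-a)*t) / a := by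
  have h := integral_comp_mul_left_Ioi (fun x => Real.exp (-x)) t ha
  simp only [smul_eq_mul] at h
  have : (fun x : ℝ => Real.exp ((-a)*x)) = fun x => Real.exp (-(a*x)) := by
    funext x; ring_nf
  rw [this]
  calc ∫ w in Ioi t, Real.exp (-(a*w)) = a⁻¹ * ∫ x in Ioi (a*t), Real.exp (-x) := h
    _ = Real.exp ((-a)*t) / a := by
        rw [integral_exp_neg_Ioi]
        rw [show (-a)*t = -(a*t) by ring]
        field_simp

lemma tail_nonneg {a β : ℝ} (ha : 0 < a) (hβ : -1 < β) {t : ℝ} (ht : 0 ≤ t) :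
    (∫ w in (0:ℝ)..t, w ^ β * Real.exp ((-a)*w)) ≤ ∫ w in Ioi (0:ℝ), w ^ β * Real.exp ((-a)*w) := by
  rw [intervalIntegral.integral_of_le ht]
  apply setIntegral_mono_set (tail_int ha hβ)
  · filter_upwards [ae_restrict_mem measurableSet_Ioi] with x hx
    exact mul_nonneg (Real.rpow_nonneg (le_of_lt hx) β) (Real.exp_nonneg _)
  · exact (Ioc_subset_Ioi_self).eventuallyLE

lemma tail_bound {a β : ℝ} (ha : 0 < a) (hβ : -1 < β) (hβ0 : β ≤ 0) {t : ℝ} (ht : 0 < t) :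
    (∫ w in Ioi (0:ℝ), w ^ β * Real.exp ((-a)*w)) - (∫ w in (0:ℝ)..t, w ^ β * Real.exp ((-a)*w))
      ≤ t ^ β * (Real.exp ((-a)*t) / a) := by
  rw [intervalIntegral.integral_of_le ht.le]
  have hdiff := MeasureTheory.integral_diff (f := fun w : ℝ => w ^ β * Real.exp ((-a)*w))
    (s := Ioi 0) (t := Ioc 0 t) measurableSet_Ioc (tail_int ha hβ) Ioc_subset_Ioi_self
  have hset : Ioi (0:ℝ) \ Ioc 0 t = Ioi t := by
    ext x
    simp only [mem_diff, mem_Ioi, mem_Ioc, not_and, not_le]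
    constructor
    · rintro ⟨hx, h2⟩; exact h2 hx
    · intro hx; exact ⟨lt_trans ht hx, fun _ => hx⟩
  rw [hset] at hdiff
  rw [← hdiff]
  calc ∫ w in Ioi t, w ^ β * Real.exp ((-a)*w)
      ≤ ∫ w in Ioi t, t ^ β * Real.exp ((-a)*w) := by
        apply setIntegral_mono_on
        · exact (tail_int ha hβ).mono_set (Ioi_subset_Ioi ht.le)
        · apply Integrable.const_mul
          have := exp_neg_integrableOn_Ioi t ha
          simpa [neg_mul] using this.integrable
        · exact measurableSet_Ioi
        · intro x hx
          apply mul_le_mul_of_nonneg_right _ (Real.exp_nonneg _)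
          exact Real.rpow_le_rpow_of_nonpos ht (le_of_lt hx) hβ0
    _ = t ^ β * (Real.exp ((-a)*t) / a) := by
        rw [MeasureTheory.integral_const_mul, exp_int_Ioi ha]

lemma P_bound {a β : ℝ} (ha : 0 < a) (hβ : -1 < β) {t : ℝ} (ht : 0 ≤ t) :
    (∫ w in (0:ℝ)..t, w ^ β * Real.exp (a*w)) ≤ Real.exp (a*t) * (t ^ (β+1) / (β+1)) := by
  have h1 : (∫ w in (0:ℝ)..t, w ^ β * Real.exp (a*w))
      ≤ ∫ w in (0:ℝ)..t, w ^ β * Real.exp (a*t) := by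
    apply intervalIntegral.integral_mono_on ht
    · exact (intervalIntegrable_rpow' hβ).mul_continuousOn
        (Real.continuous_exp.comp (continuous_const.mul continuous_id)).continuousOn
    · exact (intervalIntegrable_rpow' hβ).mul_continuousOn continuousOn_const
    · intro x hx
      apply mul_le_mul_of_nonneg_left _ (Real.rpow_nonneg hx.1 β)
      exact Real.exp_le_exp.mpr (by nlinarith [hx.2])
  refine h1.trans ?_
  rw [intervalIntegral.integral_mul_const, integral_rpow (Or.inl hβ)]
  rw [Real.zero_rpow (by linarith : β + 1 ≠ 0)]
  ring_nf
  exact le_refl _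

lemma P_nonneg {a β : ℝ} {t : ℝ} (ht : 0 ≤ t) :
    0 ≤ ∫ w in (0:ℝ)..t, w ^ β * Real.exp (a*w) := by
  apply intervalIntegral.integral_nonneg ht
  intro x hx
  exact mul_nonneg (Real.rpow_nonneg hx.1 β) (Real.exp_nonneg _)


end BiasAux

open BiasAux in
theorem bias_term_bound (a H : ℝ) (ha : 0 < a) (hH1 : 1/2 < H) (hH2 : H < 1)
    (m : ℝ → ℝ)
    (hm : ∀ t, m t = H * (2*H - 1) *
      ∫ u in (0:ℝ)..t, ∫ v in (0:ℝ)..t,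
        Real.exp (-(a*u)) * Real.exp (-(a*v)) * |u - v| ^ (2*H - 2)) :
    ∀ T : ℝ, 1 ≤ T →
      |(1/T) * (∫ t in (0:ℝ)..T, m t) - a ^ (-(2*H)) * H * Real.Gamma (2*H)|
        ≤ (2*H / a ^ (2*H + 1)) * Real.Gamma (2*H + 1) / T := by
  intro T hT
  have hT0 : (0:ℝ) < T := lt_of_lt_of_le one_pos hT
  have hβ1 : (-1:ℝ) < 2*H - 2 := by linarith
  have hβ2 : (-1:ℝ) < 2*H - 1 := by linarith
  have hβ0 : 2*H - 2 ≤ 0 := by linarith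
  have h2H1 : (0:ℝ) < 2*H - 1 := by linarith
  have hH0 : (0:ℝ) < H := by linarith
  have h2H : (0:ℝ) < 2*H := by linarith
  set Q : ℝ → ℝ := fun x => ∫ w in (0:ℝ)..x, w ^ (2*H-2) * Real.exp ((-a)*w) with hQdef
  set P : ℝ → ℝ := fun x => ∫ w in (0:ℝ)..x, w ^ (2*H-2) * Real.exp (a*w) with hPdef
  set QL : ℝ := ∫ w in Ioi (0:ℝ), w ^ (2*H-2) * Real.exp ((-a)*w) with hQLdef
  set M : ℝ → ℝ := fun t => H*(2*H-1) * ((Q t - Real.exp ((-(2*a))*t) * P t)/a) with hMdef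
  set c : ℝ := a ^ (-(2*H)) * H * Real.Gamma (2*H) with hcdef
  have hQc : Continuous Q := contP hβ1 (-a)
  have hPc : Continuous P := contP hβ1 a
  have hMc : Continuous M := by
    apply continuous_const.mul
    apply Continuous.div_const
    exact hQc.sub ((Real.continuous_exp.comp (continuous_const.mul continuous_id)).mul hPc)
  have hrep : ∀ t : ℝ, 0 ≤ t → m t = M t := by
    intro t ht
    rw [hm t, rep ha hβ1 ht]
  have hmm : (∫ t in (0:ℝ)..T, m t) = ∫ t in (0:ℝ)..T, M t := by
    apply intervalIntegral.integral_congr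
    intro t ht
    rw [uIcc_of_le hT0.le] at ht
    exact hrep t ht.1
  have hMI : IntervalIntegrable M volume 0 T := hMc.intervalIntegrable 0 T
  have hG : Real.Gamma (2*H) = (2*H-1) * Real.Gamma (2*H-1) := by
    have h := Real.Gamma_add_one (show 2*H-1 ≠ 0 by linarith)
    rw [show 2*H-1+1 = 2*H by ring] at h
    exact h
  have hG2 : Real.Gamma (2*H+1) = 2*H * Real.Gamma (2*H) := Real.Gamma_add_one (by linarith)
  have hG1pos : 0 < Real.Gamma (2*H-1) := Real.Gamma_pos_of_pos h2H1
  have hGpos : 0 < Real.Gamma (2*H) := Real.Gamma_pos_of_pos h2H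
  have hA : (0:ℝ) < a ^ (2*H-1) := Real.rpow_pos_of_pos ha _
  have hA2pos : (0:ℝ) < a ^ (2*H) := Real.rpow_pos_of_pos ha _
  have hA3pos : (0:ℝ) < a ^ (2*H+1) := Real.rpow_pos_of_pos ha _
  have hprod : a ^ (2*H) = a ^ (2*H-1) * a := by
    have h := Real.rpow_add ha (2*H-1) 1
    rw [Real.rpow_one] at h
    rw [show 2*H-1+1 = 2*H by ring] at h
    exact h
  have hprod2 : a ^ (2*H+1) = a ^ (2*H-1) * a * a := by
    have h := Real.rpow_add ha (2*H) 1
    rw [Real.rpow_one] at h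
    rw [← hprod, ← h]
  have hQLv : QL = (1/a) ^ (2*H-1) * Real.Gamma (2*H-1) := by
    rw [hQLdef, tail_val ha hβ1, show 2*H-2+1 = 2*H-1 by ring]
  have hinv1 : (1/a : ℝ) ^ (2*H-1) = (a ^ (2*H-1))⁻¹ := by
    rw [one_div, Real.inv_rpow ha.le]
  have hinv2 : (1/a : ℝ) ^ (2*H) = (a ^ (2*H))⁻¹ := by
    rw [one_div, Real.inv_rpow ha.le]
  have hrneg : a ^ (-(2*H)) = (a ^ (2*H))⁻¹ := Real.rpow_neg ha.le _
  have hc : c = H*(2*H-1) * (QL / a) := by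
    rw [hcdef, hQLv, hG, hrneg, hinv1, hprod]
    field_simp
  have hK : (0:ℝ) ≤ H*(2*H-1) := mul_nonneg hH0.le h2H1.le
  have hlow : ∀ t ∈ Icc (0:ℝ) T, 0 ≤ c - M t := by
    intro t ht
    have h1 : Q t ≤ QL := tail_nonneg ha hβ1 ht.1
    have h2 : 0 ≤ P t := P_nonneg (a := a) ht.1
    have h3 : 0 ≤ Real.exp ((-(2*a))*t) * P t := mul_nonneg (Real.exp_nonneg _) h2
    have he : c - M t = H*(2*H-1) * (((QL - Q t) + Real.exp ((-(2*a))*t) * P t)/a) := by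
      rw [hc, hMdef]; ring
    rw [he]
    have h4 : 0 ≤ (QL - Q t) + Real.exp ((-(2*a))*t) * P t := by linarith
    exact mul_nonneg hK (div_nonneg h4 ha.le)
  set g : ℝ → ℝ := fun t => H*(2*H-1) *
      ((t^(2*H-2) * Real.exp ((-a)*t) / a + t^(2*H-1) * Real.exp ((-a)*t) / (2*H-1)) / a)
    with hgdef
  have hup : ∀ t ∈ Ioc (0:ℝ) T, c - M t ≤ g t := by
    intro t ht
    have h1 : QL - Q t ≤ t^(2*H-2) * Real.exp ((-a)*t) / a := by
      have h := tail_bound ha hβ1 hβ0 ht.1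
      rw [mul_div_assoc]
      exact h
    have h2 : Real.exp ((-(2*a))*t) * P t ≤ t^(2*H-1) * Real.exp ((-a)*t) / (2*H-1) := by
      have hb := P_bound ha hβ1 ht.1.le
      rw [show (2*H-2)+1 = 2*H-1 by ring] at hb
      calc Real.exp ((-(2*a))*t) * P t
          ≤ Real.exp ((-(2*a))*t) * (Real.exp (a*t) * (t^(2*H-1)/(2*H-1))) :=
            mul_le_mul_of_nonneg_left hb (Real.exp_nonneg _)
        _ = t^(2*H-1) * Real.exp ((-a)*t) / (2*H-1) := by
            rw [← mul_assoc, ← Real.exp_add, show (-(2*a))*t + a*t = (-a)*t by ring]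
            ring
    have he : c - M t = H*(2*H-1) * (((QL - Q t) + Real.exp ((-(2*a))*t) * P t)/a) := by
      rw [hc, hMdef]; ring
    rw [he, hgdef]
    exact mul_le_mul_of_nonneg_left ((div_le_div_iff_of_pos_right ha).mpr (add_le_add h1 h2)) hK
  -- integrability of g
  have hg1 : IntegrableOn (fun t : ℝ => t^(2*H-2) * Real.exp ((-a)*t) / a) (Ioi 0) :=
    (tail_int ha hβ1).div_const a
  have hg2 : IntegrableOn (fun t : ℝ => t^(2*H-1) * Real.exp ((-a)*t) / (2*H-1)) (Ioi 0) :=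
    (tail_int ha hβ2).div_const _
  have hgIoi : IntegrableOn g (Ioi 0) := by
    rw [hgdef]
    exact ((hg1.add hg2).div_const a).const_mul (H*(2*H-1))
  have hgIoc : IntegrableOn g (Ioc 0 T) := hgIoi.mono_set Ioc_subset_Ioi_self
  have hcMint : IntegrableOn (fun t => c - M t) (Ioc 0 T) := by
    rw [← intervalIntegrable_iff_integrableOn_Ioc_of_le hT0.le]
    exact (continuous_const.sub hMc).intervalIntegrable 0 T
  have step1 : ∫ t in (0:ℝ)..T, (c - M t) ≤ ∫ t in Ioc (0:ℝ) T, g t := by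
    rw [intervalIntegral.integral_of_le hT0.le]
    exact setIntegral_mono_on hcMint hgIoc measurableSet_Ioc hup
  have step2 : ∫ t in Ioc (0:ℝ) T, g t ≤ ∫ t in Ioi (0:ℝ), g t := by
    apply setIntegral_mono_set hgIoi
    · filter_upwards [ae_restrict_mem measurableSet_Ioi] with x hx
      have hx0 : (0:ℝ) ≤ x := (le_of_lt hx)
      simp only [hgdef]
      apply mul_nonneg hK
      apply div_nonneg _ ha.le
      apply add_nonneg
      · exact div_nonneg (mul_nonneg (Real.rpow_nonneg hx0 _) (Real.exp_nonneg _)) ha.le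
      · exact div_nonneg (mul_nonneg (Real.rpow_nonneg hx0 _) (Real.exp_nonneg _)) h2H1.le
    · exact Ioc_subset_Ioi_self.eventuallyLE
  have hgval : ∫ t in Ioi (0:ℝ), g t = H*(2*H-1) *
      (((1/a)^(2*H-1) * Real.Gamma (2*H-1) / a + (1/a)^(2*H) * Real.Gamma (2*H) / (2*H-1)) / a) := by
    rw [hgdef]
    rw [MeasureTheory.integral_const_mul]
    congr 1
    rw [MeasureTheory.integral_div]
    congr 1
    rw [integral_add hg1 hg2, MeasureTheory.integral_div, MeasureTheory.integral_div,
      tail_val ha hβ1, tail_val ha hβ2,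
      show 2*H-2+1 = 2*H-1 by ring, show 2*H-1+1 = 2*H by ring]
  have hSval : H*(2*H-1) *
      (((1/a)^(2*H-1) * Real.Gamma (2*H-1) / a + (1/a)^(2*H) * Real.Gamma (2*H) / (2*H-1)) / a)
      = 2*H*Real.Gamma (2*H)/a^(2*H+1) := by
    rw [hinv1, hinv2, hG, hprod2, hprod]
    rw [mul_div_assoc (a ^ (2*H-1) * a)⁻¹, mul_div_cancel_left₀ _ h2H1.ne']
    field_simp
    ring
  have hSle : 2*H*Real.Gamma (2*H)/a^(2*H+1) ≤ (2*H/a^(2*H+1)) * Real.Gamma (2*H+1) := by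
    rw [hG2, div_mul_eq_mul_div, div_le_div_iff₀ hA3pos hA3pos]
    nlinarith [mul_pos h2H hGpos, mul_pos hA3pos (mul_pos h2H hGpos)]
  have hnn : 0 ≤ ∫ t in (0:ℝ)..T, (c - M t) :=
    intervalIntegral.integral_nonneg hT0.le (fun t ht => hlow t ht)
  have hintc : ∫ t in (0:ℝ)..T, (c - M t) = T * c - ∫ t in (0:ℝ)..T, M t := by
    rw [intervalIntegral.integral_sub (intervalIntegrable_const) hMI,
      intervalIntegral.integral_const]
    simp [smul_eq_mul]
  have hAbs : |(1/T) * (∫ t in (0:ℝ)..T, m t) - c| = (1/T) * ∫ t in (0:ℝ)..T, (c - M t) := by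
    rw [hmm]
    have h1 : ∫ t in (0:ℝ)..T, M t ≤ T * c := by
      have h := hnn
      rw [hintc] at h
      linarith
    have hle : (1/T) * (∫ t in (0:ℝ)..T, M t) - c ≤ 0 := by
      have h2 : (1/T) * (∫ t in (0:ℝ)..T, M t) ≤ (1/T) * (T * c) :=
        mul_le_mul_of_nonneg_left h1 (by positivity)
      have h3 : (1/T) * (T * c) = c := by field_simp
      linarith
    rw [abs_of_nonpos hle, hintc]
    field_simp
    try ring
  rw [hAbs]
  have hfinal : ∫ t in (0:ℝ)..T, (c - M t) ≤ (2*H/a^(2*H+1)) * Real.Gamma (2*H+1) := by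
    calc ∫ t in (0:ℝ)..T, (c - M t) ≤ ∫ t in Ioc (0:ℝ) T, g t := step1
      _ ≤ ∫ t in Ioi (0:ℝ), g t := step2
      _ = H*(2*H-1) *
          (((1/a)^(2*H-1) * Real.Gamma (2*H-1) / a + (1/a)^(2*H) * Real.Gamma (2*H) / (2*H-1)) / a) := hgval
      _ = 2*H*Real.Gamma (2*H)/a^(2*H+1) := hSval
      _ ≤ (2*H/a^(2*H+1)) * Real.Gamma (2*H+1) := hSle
  calc (1/T) * ∫ t in (0:ℝ)..T, (c - M t)
      ≤ (1/T) * ((2*H/a^(2*H+1)) * Real.Gamma (2*H+1)) :=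
        mul_le_mul_of_nonneg_left hfinal (by positivity)
    _ = (2*H / a ^ (2*H + 1)) * Real.Gamma (2*H + 1) / T := by ring
end

section
/- Let H ∈ (1/2, 3/4). Then the constant σ_H² = ((2H−1)/(H Γ(2H)²))² ∫_ℝ ( ∫_{[0,∞)²} e^{-(u+v)} |u−v−x|^{2H−2} du dv )² dx is finite. -/
open MeasureTheory Real Set

namespace SigmaHAux


/-- bump: `|s|^α` on `[-1,1]`, `0` elsewhere. -/
noncomputable def gb (α : ℝ) : ℝ → ℝ := (Set.Icc (-1:ℝ) 1).indicator (fun s => |s| ^ α)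

lemma gb_nonneg (α t : ℝ) : 0 ≤ gb α t :=
  Set.indicator_nonneg (fun s _ => Real.rpow_nonneg (abs_nonneg s) α) t

lemma integrableOn_abs_rpow {α : ℝ} (hα : -1 < α) :
    IntegrableOn (fun s : ℝ => |s| ^ α) (Icc (-1:ℝ) 1) := by
  have h1 : IntegrableOn (fun s : ℝ => (s : ℝ) ^ α) (Ioc (0:ℝ) 1) :=
    (intervalIntegral.intervalIntegrable_rpow' hα (a := 0) (b := 1)).1
  have h2 : IntegrableOn (fun s : ℝ => |s| ^ α) (Ioc (0:ℝ) 1) := by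
    refine h1.congr_fun (fun s hs => ?_) measurableSet_Ioc
    rw [abs_of_pos hs.1]
  have h2' : IntegrableOn (fun s : ℝ => |s| ^ α) (Icc (0:ℝ) 1) := by
    rwa [integrableOn_Icc_iff_integrableOn_Ioc]
  have h3 : IntegrableOn (fun s : ℝ => |s| ^ α) (Ico (-1:ℝ) 0) := by
    have hI : Integrable ((Ioc (0:ℝ) 1).indicator (fun s : ℝ => |s| ^ α)) :=
      (integrable_indicator_iff measurableSet_Ioc).2 h2
    have hneg : Integrable (fun s : ℝ => (Ioc (0:ℝ) 1).indicator (fun t : ℝ => |t| ^ α) (-s)) :=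
      hI.comp_neg
    have heq : (fun s : ℝ => (Ioc (0:ℝ) 1).indicator (fun t : ℝ => |t| ^ α) (-s))
        = (Ico (-1:ℝ) 0).indicator (fun t : ℝ => |t| ^ α) := by
      funext s
      by_cases hs : -s ∈ Ioc (0:ℝ) 1
      · rw [Set.indicator_of_mem hs, Set.indicator_of_mem (by
          constructor <;> [linarith [hs.2]; linarith [hs.1]]), abs_neg]
      · rw [Set.indicator_of_notMem hs, Set.indicator_of_notMem (by
          intro hmem; exact hs ⟨by linarith [hmem.2], by linarith [hmem.1]⟩)]
    rw [heq] at hneg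
    exact (integrable_indicator_iff measurableSet_Ico).1 hneg
  have := h3.union h2'
  rwa [Set.Ico_union_Icc_eq_Icc (by norm_num) (by norm_num)] at this

lemma gb_integrable {α : ℝ} (hα : -1 < α) : Integrable (gb α) :=
  (integrable_indicator_iff measurableSet_Icc).2 (integrableOn_abs_rpow hα)

lemma ptbound {α : ℝ} (hα0 : α < 0) (r c v : ℝ) (hr : 0 ≤ r) (hv : 0 ≤ v) :
    exp (-(r * v)) * |v - c| ^ α ≤ exp (-(r * v)) + gb α (v - c) := by
  rcases le_or_gt (|v - c|) 1 with h | h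
  · have hg : gb α (v - c) = |v - c| ^ α := by
      rw [gb, Set.indicator_of_mem]
      exact abs_le.mp h
    have h1 : exp (-(r * v)) ≤ 1 := exp_le_one_iff.2 (by nlinarith)
    calc exp (-(r * v)) * |v - c| ^ α ≤ 1 * |v - c| ^ α := by
          exact mul_le_mul_of_nonneg_right h1 (Real.rpow_nonneg (abs_nonneg _) α)
      _ = gb α (v - c) := by rw [one_mul, hg]
      _ ≤ exp (-(r * v)) + gb α (v - c) := le_add_of_nonneg_left (exp_pos _).le
  · have h1 : |v - c| ^ α ≤ 1 := Real.rpow_le_one_of_one_le_of_nonpos h.le hα0.le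
    calc exp (-(r * v)) * |v - c| ^ α ≤ exp (-(r * v)) * 1 :=
          mul_le_mul_of_nonneg_left h1 (exp_pos _).le
      _ ≤ exp (-(r * v)) + gb α (v - c) := by
          rw [mul_one]; exact le_add_of_nonneg_right (gb_nonneg α _)

lemma integrableOn_kernel {α : ℝ} (hα1 : -1 < α) (hα0 : α < 0) {r : ℝ} (hr : 0 < r) (c : ℝ) :
    IntegrableOn (fun v => exp (-(r * v)) * |v - c| ^ α) (Ioi (0:ℝ)) := by
  have hexp : IntegrableOn (fun v : ℝ => exp (-(r * v))) (Ioi (0:ℝ)) := by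
    simpa [neg_mul] using exp_neg_integrableOn_Ioi 0 hr
  have hb : Integrable (fun v : ℝ => exp (-(r * v)) + gb α (v - c))
      (volume.restrict (Ioi (0:ℝ))) :=
    hexp.add ((gb_integrable hα1).comp_sub_right c).integrableOn
  refine Integrable.mono' hb ?_ ?_
  · exact ((measurable_const_mul r).neg.exp.mul
      (((measurable_id.sub_const c).abs).pow measurable_const)).aestronglyMeasurable
  · filter_upwards [ae_restrict_mem measurableSet_Ioi] with v hv
    rw [Real.norm_eq_abs, abs_of_nonneg (mul_nonneg (exp_pos _).le
      (Real.rpow_nonneg (abs_nonneg _) α))]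
    exact ptbound hα0 r c v hr.le (le_of_lt hv)

lemma J_le {α : ℝ} (hα1 : -1 < α) (hα0 : α < 0) {r : ℝ} (hr : 0 < r) (c : ℝ) :
    ∫ v in Ioi (0:ℝ), exp (-(r * v)) * |v - c| ^ α
      ≤ (∫ v in Ioi (0:ℝ), exp (-(r * v))) + ∫ t, gb α t := by
  have hexp : IntegrableOn (fun v : ℝ => exp (-(r * v))) (Ioi (0:ℝ)) := by
    simpa [neg_mul] using exp_neg_integrableOn_Ioi 0 hr
  have hgbi : Integrable (fun v : ℝ => gb α (v - c)) := (gb_integrable hα1).comp_sub_right c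
  have hb : Integrable (fun v : ℝ => exp (-(r * v)) + gb α (v - c))
      (volume.restrict (Ioi (0:ℝ))) := hexp.add hgbi.integrableOn
  calc ∫ v in Ioi (0:ℝ), exp (-(r * v)) * |v - c| ^ α
      ≤ ∫ v in Ioi (0:ℝ), (exp (-(r * v)) + gb α (v - c)) := by
        refine integral_mono_of_nonneg ?_ hb ?_
        · filter_upwards with v
          exact mul_nonneg (exp_pos _).le (Real.rpow_nonneg (abs_nonneg _) α)
        · filter_upwards [ae_restrict_mem measurableSet_Ioi] with v hv
          exact ptbound hα0 r c v hr.le (le_of_lt hv)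
    _ = (∫ v in Ioi (0:ℝ), exp (-(r * v))) + ∫ v in Ioi (0:ℝ), gb α (v - c) :=
        integral_add hexp hgbi.integrableOn
    _ ≤ (∫ v in Ioi (0:ℝ), exp (-(r * v))) + ∫ v, gb α (v - c) := by
        gcongr
        exact Filter.Eventually.of_forall fun v => gb_nonneg α _
        exact Measure.restrict_le_self
    _ = (∫ v in Ioi (0:ℝ), exp (-(r * v))) + ∫ t, gb α t := by
        rw [integral_sub_right_eq_self (gb α) c]

lemma J_nonneg (α r c : ℝ) : 0 ≤ ∫ v in Ioi (0:ℝ), exp (-(r * v)) * |v - c| ^ α :=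
  integral_nonneg fun v => mul_nonneg (exp_pos _).le (Real.rpow_nonneg (abs_nonneg _) α)



lemma split {α : ℝ} (hα0 : α < 0) (x u v : ℝ) (hu : 0 ≤ u) (hv : 0 ≤ v) :
    exp (-(u + v)) * |u - v - x| ^ α ≤
      ((|x| / 2) ^ α * exp (-(1 * u))) * exp (-(1 * v))
      + (exp (-(|x| / 4)) * exp (-(2⁻¹ * u))) * (exp (-(2⁻¹ * v)) * |v - (u - x)| ^ α) := by
  have habs : |u - v - x| = |v - (u - x)| := by
    rw [show u - v - x = -(v - (u - x)) by ring, abs_neg]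
  have hrpos : (0:ℝ) ≤ |v - (u - x)| ^ α := Real.rpow_nonneg (abs_nonneg _) _
  have step2 : exp (-(u + v)) ≤ exp (-(|x| / 4)) * exp (-(2⁻¹ * u)) * exp (-(2⁻¹ * v)) →
      exp (-(u + v)) * |u - v - x| ^ α ≤
        (exp (-(|x| / 4)) * exp (-(2⁻¹ * u))) * (exp (-(2⁻¹ * v)) * |v - (u - x)| ^ α) := by
    intro h
    rw [habs]
    calc exp (-(u + v)) * |v - (u - x)| ^ α
        ≤ (exp (-(|x| / 4)) * exp (-(2⁻¹ * u)) * exp (-(2⁻¹ * v))) * |v - (u - x)| ^ α :=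
          mul_le_mul_of_nonneg_right h hrpos
      _ = (exp (-(|x| / 4)) * exp (-(2⁻¹ * u))) * (exp (-(2⁻¹ * v)) * |v - (u - x)| ^ α) := by
          ring
  rcases eq_or_ne x 0 with hx | hx
  · subst hx
    have key : exp (-(u + v)) ≤ exp (-(|(0:ℝ)| / 4)) * exp (-(2⁻¹ * u)) * exp (-(2⁻¹ * v)) := by
      rw [← exp_add, ← exp_add]
      apply exp_le_exp.2
      simp only [abs_zero]
      nlinarith
    have h0 : ((|(0:ℝ)| / 2) ^ α * exp (-(1 * u))) * exp (-(1 * v)) = 0 := by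
      simp [Real.zero_rpow hα0.ne]
    rw [h0, zero_add]
    exact step2 key
  · rcases le_or_gt (|x| / 2) (|u - v - x|) with hc | hc
    · have hxpos : (0:ℝ) < |x| / 2 := by
        have := abs_pos.2 hx; linarith
      have h3 : |u - v - x| ^ α ≤ (|x| / 2) ^ α :=
        Real.rpow_le_rpow_of_nonpos hxpos hc hα0.le
      calc exp (-(u + v)) * |u - v - x| ^ α
          ≤ exp (-(u + v)) * (|x| / 2) ^ α := mul_le_mul_of_nonneg_left h3 (exp_pos _).le
        _ = ((|x| / 2) ^ α * exp (-(1 * u))) * exp (-(1 * v)) := by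
            rw [show -(u + v) = -(1 * u) + -(1 * v) by ring, exp_add]; ring
        _ ≤ _ := le_add_of_nonneg_right (by positivity)
    · have h4 : |x| ≤ |u - v| + |u - v - x| := by
        have h := abs_add_le (u - v) (-(u - v - x))
        rw [abs_neg] at h
        rw [show (u - v) + -(u - v - x) = x by ring] at h
        exact h
      have h5 : |u - v| ≤ u + v := abs_le.2 ⟨by linarith, by linarith⟩
      have h6 : |x| / 2 ≤ u + v := by linarith
      have key : exp (-(u + v)) ≤ exp (-(|x| / 4)) * exp (-(2⁻¹ * u)) * exp (-(2⁻¹ * v)) := by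
        rw [← exp_add, ← exp_add]
        apply exp_le_exp.2
        nlinarith
      calc exp (-(u + v)) * |u - v - x| ^ α
          ≤ (exp (-(|x| / 4)) * exp (-(2⁻¹ * u))) * (exp (-(2⁻¹ * v)) * |v - (u - x)| ^ α) :=
            step2 key
        _ ≤ _ := le_add_of_nonneg_left (by positivity)

lemma inner_eq (α x u : ℝ) :
    (∫ v in Ioi (0:ℝ), exp (-(u + v)) * |u - v - x| ^ α)
      = exp (-(1 * u)) * ∫ v in Ioi (0:ℝ), exp (-(1 * v)) * |v - (u - x)| ^ α := by
  have h : (fun v : ℝ => exp (-(u + v)) * |u - v - x| ^ α)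
      = fun v : ℝ => exp (-(1 * u)) * (exp (-(1 * v)) * |v - (u - x)| ^ α) := by
    funext v
    rw [show -(u + v) = -(1 * u) + -(1 * v) by ring, exp_add,
      show u - v - x = -(v - (u - x)) by ring, abs_neg, mul_assoc]
  rw [h, MeasureTheory.integral_const_mul]



lemma aux2 {α x : ℝ} (hα0 : α < 0) (hx : |x| ≤ 1) : (2:ℝ) ^ α ≤ (1 + |x|) ^ α := by
  have h0 : (0:ℝ) < 1 + |x| := by positivity
  exact Real.rpow_le_rpow_of_nonpos h0 (by linarith) hα0.le

lemma aux4 {α x : ℝ} (hα0 : α < 0) (hx : 1 ≤ |x|) :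
    (|x| / 2) ^ α ≤ 4 ^ (-α) * (1 + |x|) ^ α := by
  have h1 : (0:ℝ) < 1 + |x| := by positivity
  have h3 : (4 * (|x| / 2)) ^ α ≤ (1 + |x|) ^ α :=
    Real.rpow_le_rpow_of_nonpos h1 (by linarith) hα0.le
  have h4 : (4 * (|x| / 2)) ^ α = 4 ^ α * (|x| / 2) ^ α :=
    Real.mul_rpow (by norm_num) (by positivity)
  have h6 : (4:ℝ) ^ (-α) * (4:ℝ) ^ α = 1 := by
    rw [← Real.rpow_add (by norm_num), neg_add_cancel, Real.rpow_zero]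
  calc (|x| / 2) ^ α = (4 ^ (-α) * 4 ^ α) * (|x| / 2) ^ α := by rw [h6, one_mul]
    _ = 4 ^ (-α) * ((4 * (|x| / 2)) ^ α) := by rw [h4]; ring
    _ ≤ 4 ^ (-α) * (1 + |x|) ^ α :=
        mul_le_mul_of_nonneg_left h3 (Real.rpow_nonneg (by norm_num) _)

lemma aux9 {α : ℝ} (x : ℝ) (hα1 : -1 < α) (hα0 : α < 0) :
    exp (-(|x| / 4)) ≤ 9 * (1 + |x|) ^ α := by
  have h1 : 1 + |x| ≤ 9 * exp (|x| / 8) := by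
    have h := add_one_le_exp (|x| / 8)
    nlinarith [abs_nonneg x]
  have h2 : (9 * exp (|x| / 8)) ^ α ≤ (1 + |x|) ^ α :=
    Real.rpow_le_rpow_of_nonpos (by positivity) h1 hα0.le
  have h3 : (9 * exp (|x| / 8)) ^ α = 9 ^ α * exp ((|x| / 8) * α) := by
    rw [Real.mul_rpow (by norm_num) (exp_pos _).le, ← Real.exp_mul]
  have h4 : exp (-(|x| / 4)) ≤ exp ((|x| / 8) * α) := by
    apply exp_le_exp.2; nlinarith [abs_nonneg x]
  have h5 : (1:ℝ) ≤ 9 * 9 ^ α := by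
    have h := Real.rpow_le_rpow_of_exponent_le (by norm_num : (1:ℝ) ≤ 9)
      (by linarith : (0:ℝ) ≤ 1 + α)
    rwa [Real.rpow_zero, Real.rpow_add (by norm_num), Real.rpow_one] at h
  calc exp (-(|x| / 4)) ≤ exp ((|x| / 8) * α) := h4
    _ ≤ (9 * 9 ^ α) * exp ((|x| / 8) * α) := le_mul_of_one_le_left (exp_pos _).le h5
    _ = 9 * ((9 * exp (|x| / 8)) ^ α) := by rw [h3]; ring
    _ ≤ 9 * (1 + |x|) ^ α := mul_le_mul_of_nonneg_left h2 (by norm_num)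


lemma f_le {α : ℝ} (hα1 : -1 < α) (hα0 : α < 0) :
    ∃ A : ℝ, 0 ≤ A ∧ ∀ x : ℝ,
      (∫ u in Ioi (0:ℝ), ∫ v in Ioi (0:ℝ), exp (-(u + v)) * |u - v - x| ^ α)
        ≤ A * (1 + |x|) ^ α := by
  have hexp1 : IntegrableOn (fun v : ℝ => exp (-(1 * v))) (Ioi (0:ℝ)) := by
    simpa using exp_neg_integrableOn_Ioi 0 one_pos
  have hexph : IntegrableOn (fun v : ℝ => exp (-(2⁻¹ * v))) (Ioi (0:ℝ)) := by
    simpa using exp_neg_integrableOn_Ioi 0 (by norm_num : (0:ℝ) < 2⁻¹)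
  set K1 : ℝ := ∫ v in Ioi (0:ℝ), exp (-(1 * v)) with hK1def
  set Kh : ℝ := ∫ v in Ioi (0:ℝ), exp (-(2⁻¹ * v)) with hKhdef
  set P : ℝ := ∫ t, gb α t with hPdef
  have hK1n : 0 ≤ K1 := integral_nonneg fun v => (exp_pos _).le
  have hKhn : 0 ≤ Kh := integral_nonneg fun v => (exp_pos _).le
  have hPn : 0 ≤ P := integral_nonneg fun t => gb_nonneg α t
  have hfnn : ∀ x u : ℝ,
      0 ≤ ∫ v in Ioi (0:ℝ), exp (-(u + v)) * |u - v - x| ^ α := fun x u =>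
    integral_nonneg fun v => mul_nonneg (exp_pos _).le (Real.rpow_nonneg (abs_nonneg _) _)
  -- uniform bound
  have h_unif : ∀ x : ℝ,
      (∫ u in Ioi (0:ℝ), ∫ v in Ioi (0:ℝ), exp (-(u + v)) * |u - v - x| ^ α)
        ≤ K1 * (K1 + P) := by
    intro x
    have hptw : ∀ u : ℝ,
        (∫ v in Ioi (0:ℝ), exp (-(u + v)) * |u - v - x| ^ α)
          ≤ exp (-(1 * u)) * (K1 + P) := by
      intro u
      rw [inner_eq]
      exact mul_le_mul_of_nonneg_left (J_le hα1 hα0 one_pos (u - x)) (exp_pos _).le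
    calc (∫ u in Ioi (0:ℝ), ∫ v in Ioi (0:ℝ), exp (-(u + v)) * |u - v - x| ^ α)
        ≤ ∫ u in Ioi (0:ℝ), exp (-(1 * u)) * (K1 + P) := by
          refine integral_mono_of_nonneg (ae_of_all _ fun u => hfnn x u)
            (hexp1.mul_const _) (ae_of_all _ fun u => hptw u)
      _ = K1 * (K1 + P) := by rw [MeasureTheory.integral_mul_const]
  -- tail bound
  have h_tail : ∀ x : ℝ,
      (∫ u in Ioi (0:ℝ), ∫ v in Ioi (0:ℝ), exp (-(u + v)) * |u - v - x| ^ α)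
        ≤ ((|x| / 2) ^ α * K1) * K1 + (exp (-(|x| / 4)) * (Kh + P)) * Kh := by
    intro x
    have hinner : ∀ u : ℝ, 0 ≤ u →
        (∫ v in Ioi (0:ℝ), exp (-(u + v)) * |u - v - x| ^ α)
          ≤ ((|x| / 2) ^ α * K1) * exp (-(1 * u))
            + (exp (-(|x| / 4)) * (Kh + P)) * exp (-(2⁻¹ * u)) := by
      intro u hu
      have hi1 : Integrable (fun v : ℝ => ((|x| / 2) ^ α * exp (-(1 * u))) * exp (-(1 * v)))
          (volume.restrict (Ioi (0:ℝ))) := hexp1.const_mul _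
      have hi2 : Integrable (fun v : ℝ => (exp (-(|x| / 4)) * exp (-(2⁻¹ * u)))
            * (exp (-(2⁻¹ * v)) * |v - (u - x)| ^ α)) (volume.restrict (Ioi (0:ℝ))) :=
        (integrableOn_kernel hα1 hα0 (by norm_num : (0:ℝ) < 2⁻¹) (u - x)).const_mul _
      calc (∫ v in Ioi (0:ℝ), exp (-(u + v)) * |u - v - x| ^ α)
          ≤ ∫ v in Ioi (0:ℝ), (((|x| / 2) ^ α * exp (-(1 * u))) * exp (-(1 * v))
              + (exp (-(|x| / 4)) * exp (-(2⁻¹ * u)))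
                * (exp (-(2⁻¹ * v)) * |v - (u - x)| ^ α)) := by
            refine integral_mono_of_nonneg (ae_of_all _ fun v =>
              mul_nonneg (exp_pos _).le (Real.rpow_nonneg (abs_nonneg _) _))
              (hi1.add hi2) ?_
            filter_upwards [ae_restrict_mem measurableSet_Ioi] with v hv
            exact split hα0 x u v hu (le_of_lt hv)
        _ = ((|x| / 2) ^ α * exp (-(1 * u))) * K1
            + (exp (-(|x| / 4)) * exp (-(2⁻¹ * u)))
              * (∫ v in Ioi (0:ℝ), exp (-(2⁻¹ * v)) * |v - (u - x)| ^ α) := by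
            rw [integral_add hi1 hi2, MeasureTheory.integral_const_mul,
              MeasureTheory.integral_const_mul]
        _ ≤ ((|x| / 2) ^ α * exp (-(1 * u))) * K1
            + (exp (-(|x| / 4)) * exp (-(2⁻¹ * u))) * (Kh + P) := by
            have := J_le hα1 hα0 (by norm_num : (0:ℝ) < 2⁻¹) (u - x)
            have hc : (0:ℝ) ≤ exp (-(|x| / 4)) * exp (-(2⁻¹ * u)) := by positivity
            exact add_le_add_right (mul_le_mul_of_nonneg_left this hc) _
        _ = ((|x| / 2) ^ α * K1) * exp (-(1 * u))
            + (exp (-(|x| / 4)) * (Kh + P)) * exp (-(2⁻¹ * u)) := by ring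
    have hΦi : Integrable (fun u : ℝ => ((|x| / 2) ^ α * K1) * exp (-(1 * u))
        + (exp (-(|x| / 4)) * (Kh + P)) * exp (-(2⁻¹ * u)))
        (volume.restrict (Ioi (0:ℝ))) :=
      (hexp1.const_mul _).add (hexph.const_mul _)
    calc (∫ u in Ioi (0:ℝ), ∫ v in Ioi (0:ℝ), exp (-(u + v)) * |u - v - x| ^ α)
        ≤ ∫ u in Ioi (0:ℝ), (((|x| / 2) ^ α * K1) * exp (-(1 * u))
            + (exp (-(|x| / 4)) * (Kh + P)) * exp (-(2⁻¹ * u))) := by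
          refine integral_mono_of_nonneg (ae_of_all _ fun u => hfnn x u) hΦi ?_
          filter_upwards [ae_restrict_mem measurableSet_Ioi] with u hu
          exact hinner u (le_of_lt hu)
      _ = ((|x| / 2) ^ α * K1) * K1 + (exp (-(|x| / 4)) * (Kh + P)) * Kh := by
          rw [integral_add (hexp1.const_mul _) (hexph.const_mul _),
            MeasureTheory.integral_const_mul, MeasureTheory.integral_const_mul]
  -- combine
  have hT1n : (0:ℝ) ≤ (K1 * (K1 + P)) * 2 ^ (-α) :=
    mul_nonneg (mul_nonneg hK1n (by linarith)) (Real.rpow_nonneg (by norm_num) _)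
  have hT2n : (0:ℝ) ≤ (K1 * K1) * 4 ^ (-α) :=
    mul_nonneg (mul_nonneg hK1n hK1n) (Real.rpow_nonneg (by norm_num) _)
  have hT3n : (0:ℝ) ≤ ((Kh + P) * Kh) * 9 :=
    mul_nonneg (mul_nonneg (by linarith) hKhn) (by norm_num)
  refine ⟨(K1 * (K1 + P)) * 2 ^ (-α) + (K1 * K1) * 4 ^ (-α) + ((Kh + P) * Kh) * 9,
    by linarith, fun x => ?_⟩
  have h1x : (0:ℝ) < 1 + |x| := by positivity
  rcases le_or_gt (|x|) 1 with hx | hx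
  · calc (∫ u in Ioi (0:ℝ), ∫ v in Ioi (0:ℝ), exp (-(u + v)) * |u - v - x| ^ α)
        ≤ K1 * (K1 + P) := h_unif x
      _ = ((K1 * (K1 + P)) * 2 ^ (-α)) * 2 ^ α := by
          rw [mul_assoc, ← Real.rpow_add (by norm_num : (0:ℝ) < 2), neg_add_cancel,
            Real.rpow_zero, mul_one]
      _ ≤ ((K1 * (K1 + P)) * 2 ^ (-α)) * (1 + |x|) ^ α :=
          mul_le_mul_of_nonneg_left (aux2 hα0 hx) hT1n
      _ ≤ _ := by
          have h2 : (0:ℝ) ≤ (1 + |x|) ^ α := Real.rpow_nonneg h1x.le _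
          nlinarith
  · calc (∫ u in Ioi (0:ℝ), ∫ v in Ioi (0:ℝ), exp (-(u + v)) * |u - v - x| ^ α)
        ≤ ((|x| / 2) ^ α * K1) * K1 + (exp (-(|x| / 4)) * (Kh + P)) * Kh := h_tail x
      _ ≤ (((4:ℝ) ^ (-α) * (1 + |x|) ^ α) * K1) * K1
          + ((9 * (1 + |x|) ^ α) * (Kh + P)) * Kh := by
          refine add_le_add
            (mul_le_mul_of_nonneg_right (mul_le_mul_of_nonneg_right (aux4 hα0 hx.le) hK1n) hK1n)
            (mul_le_mul_of_nonneg_right (mul_le_mul_of_nonneg_right (aux9 x hα1 hα0)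
              (by linarith)) hKhn)
      _ = ((K1 * K1) * 4 ^ (-α) + ((Kh + P) * Kh) * 9) * (1 + |x|) ^ α := by ring
      _ ≤ _ := by
          have h2 : (0:ℝ) ≤ (1 + |x|) ^ α := Real.rpow_nonneg h1x.le _
          nlinarith

end SigmaHAux

open SigmaHAux in

theorem sigmaH_finite (H : ℝ) (hH1 : 1/2 < H) (hH2 : H < 3/4) :
    Integrable (fun x : ℝ =>
      (∫ u in Ioi (0:ℝ), ∫ v in Ioi (0:ℝ),
        Real.exp (-(u + v)) * |u - v - x| ^ (2*H - 2)) ^ 2) := by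
  have hα1 : (-1:ℝ) < 2*H - 2 := by linarith
  have hα0 : 2*H - 2 < 0 := by linarith
  obtain ⟨A, hA0, hA⟩ := f_le hα1 hα0
  have hr : (1:ℝ) < 4 - 4*H := by linarith
  have hint : Integrable (fun x : ℝ => A ^ 2 * (1 + |x|) ^ (-(4 - 4*H))) := by
    have h := (integrable_one_add_norm (E := ℝ) (μ := volume) (r := 4 - 4*H)
      (by simpa using hr)).const_mul (A ^ 2)
    simpa [Real.norm_eq_abs] using h
  refine hint.mono' ?_ ?_
  · have hmeas : Measurable fun q : (ℝ × ℝ) × ℝ =>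
        exp (-(q.1.2 + q.2)) * |q.1.2 - q.2 - q.1.1| ^ (2*H - 2) :=
      ((measurable_fst.snd.add measurable_snd).neg.exp).mul
        (((measurable_fst.snd.sub measurable_snd).sub measurable_fst.fst).abs.pow
          measurable_const)
    have h1 : StronglyMeasurable fun p : ℝ × ℝ =>
        ∫ v in Ioi (0:ℝ), exp (-(p.2 + v)) * |p.2 - v - p.1| ^ (2*H - 2) :=
      hmeas.stronglyMeasurable.integral_prod_right'
    have h2 : StronglyMeasurable fun x : ℝ =>
        ∫ u in Ioi (0:ℝ), ∫ v in Ioi (0:ℝ), exp (-(u + v)) * |u - v - x| ^ (2*H - 2) :=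
      h1.integral_prod_right'
    exact ((h2.measurable.pow_const 2)).aestronglyMeasurable
  · filter_upwards with x
    have hfn : 0 ≤ ∫ u in Ioi (0:ℝ), ∫ v in Ioi (0:ℝ),
        exp (-(u + v)) * |u - v - x| ^ (2*H - 2) :=
      integral_nonneg fun u => integral_nonneg fun v =>
        mul_nonneg (exp_pos _).le (Real.rpow_nonneg (abs_nonneg _) _)
    have h1x : (0:ℝ) < 1 + |x| := by positivity
    rw [Real.norm_eq_abs, abs_of_nonneg (sq_nonneg _)]
    calc (∫ u in Ioi (0:ℝ), ∫ v in Ioi (0:ℝ),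
            exp (-(u + v)) * |u - v - x| ^ (2*H - 2)) ^ 2
        ≤ (A * (1 + |x|) ^ (2*H - 2)) ^ 2 := pow_le_pow_left₀ hfn (hA x) 2
      _ = A ^ 2 * (1 + |x|) ^ (-(4 - 4*H)) := by
          rw [mul_pow, ← Real.rpow_natCast ((1 + |x|) ^ (2*H - 2)) 2,
            ← Real.rpow_mul h1x.le,
            show (2*H - 2) * ((2:ℕ):ℝ) = -(4 - 4*H) by push_cast; ring]
end
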